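/- arXiv:1410.4645 — 2 statements merged into one kernel-verified Lean document; each statement's English description precedes it below -/
import Mathlib

section
/- Let G be a countable discrete group acting continuously on a compact metric space (X,d), let K ⊆ X be non-empty and compact, and let {F_n} be a sequence of finite subsets of G satisfying lim_{n→∞} |F_n|/log n = ∞ (no Følner condition is required). Then h^B_top(K,{F_n}) = sup{ h̲_μ^{loc}({F_n}) : μ a Borel probability measure on X with μ(K) = 1 }. -/
open Filter Set MeasureTheory Topology ENNReal Pointwise

variable {G X : Type*}

section Defs

variable [Group G] [MetricSpace X] [MulAction G X]

/-- The Bowen ball `B_F(x,ε) = {y : d(gx,gy) < ε for all g ∈ F}`. -/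
def bowenBall (F : Finset G) (x : X) (ε : ℝ) : Set X :=
  {y : X | ∀ g ∈ F, dist (g • x) (g • y) < ε}

/-- A Følner sequence: `|F_n ∆ gF_n|/|F_n| → 0` for every `g ∈ G`. -/
def IsFolnerSeq (F : ℕ → Finset G) : Prop :=
  ∀ g : G, Tendsto
    (fun n => ((symmDiff (F n : Set G) ((g * ·) '' (F n : Set G))).ncard : ℝ) / (F n).card)
    atTop (𝓝 0)

/-- A tempered sequence: `|⋃_{k<n} F_k⁻¹ F_n| ≤ C |F_n|` for all `n`. -/
def IsTemperedSeq (F : ℕ → Finset G) : Prop :=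
  ∃ C : ℝ, 0 < C ∧ ∀ n : ℕ,
    ((⋃ k ∈ Finset.range n, ((F k : Set G)⁻¹ * (F n : Set G))).ncard : ℝ) ≤ C * (F n).card

/-- The growth condition `lim_n |F_n| / log n = ∞`. -/
def GrowthCond (F : ℕ → Finset G) : Prop :=
  Tendsto (fun n : ℕ => ((F n).card : ℝ) / Real.log n) atTop atTop

/-- `M(Z,N,ε,s,{F_n})`: infimum of `∑ exp(-s |F_{n_i}|)` over countable families of Bowen
balls `B_{F_{n_i}}(x_i,ε)`, `n_i ≥ N`, covering `Z`. -/
noncomputable def ballM (F : ℕ → Finset G) (Z : Set X) (N : ℕ) (ε s : ℝ) : ℝ≥0∞ :=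
  ⨅ (I : Set (X × ℕ)) (_ : I.Countable) (_ : ∀ p ∈ I, N ≤ p.2)
    (_ : Z ⊆ ⋃ p ∈ I, bowenBall (F p.2) p.1 ε),
    ∑' p : I, ENNReal.ofReal (Real.exp (-s * ((F (p : X × ℕ).2).card : ℝ)))

/-- `M(Z,ε,s,{F_n}) = lim_{N→∞} M(Z,N,ε,s,{F_n})` (the quantity is nondecreasing in `N`). -/
noncomputable def ballMN (F : ℕ → Finset G) (Z : Set X) (ε s : ℝ) : ℝ≥0∞ :=
  ⨆ N : ℕ, ballM F Z N ε s

/-- `M(Z,s,{F_n}) = lim_{ε→0} M(Z,ε,s,{F_n})` (the quantity is nondecreasing as `ε` decreases). -/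
noncomputable def ballMtot (F : ℕ → Finset G) (Z : Set X) (s : ℝ) : ℝ≥0∞ :=
  ⨆ (ε : ℝ) (_ : 0 < ε), ballMN F Z ε s

/-- The Bowen topological entropy of `Z` along `{F_n}`: the critical value of `s` at which
`M(Z,s,{F_n})` jumps from `+∞` to `0`, i.e. `inf {s : M(Z,s,{F_n}) = 0}`. -/
noncomputable def bowenEnt (F : ℕ → Finset G) (Z : Set X) : ℝ≥0∞ :=
  ⨅ (s : ℝ) (_ : ballMtot F Z s = 0), ENNReal.ofReal s

/-- The weighted quantity `W(f,N,ε,s,{F_n})`. -/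
noncomputable def wtW (F : ℕ → Finset G) (f : X → ℝ≥0∞) (N : ℕ) (ε s : ℝ) : ℝ≥0∞ :=
  ⨅ (I : Set (X × ℕ)) (c : X × ℕ → ℝ≥0∞) (_ : I.Countable)
    (_ : ∀ p ∈ I, N ≤ p.2 ∧ 0 < c p ∧ c p < ⊤)
    (_ : ∀ x : X, f x ≤ ∑' p : I, c (p : X × ℕ) *
        (bowenBall (F (p : X × ℕ).2) (p : X × ℕ).1 ε).indicator (fun _ => (1 : ℝ≥0∞)) x),
    ∑' p : I, c (p : X × ℕ) * ENNReal.ofReal (Real.exp (-s * ((F (p : X × ℕ).2).card : ℝ)))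

/-- `W(Z,N,ε,s,{F_n}) = W(χ_Z,N,ε,s,{F_n})`. -/
noncomputable def wtWset (F : ℕ → Finset G) (Z : Set X) (N : ℕ) (ε s : ℝ) : ℝ≥0∞ :=
  wtW F (Z.indicator fun _ => (1 : ℝ≥0∞)) N ε s

/-- `W(Z,ε,s,{F_n}) = lim_{N→∞} W(Z,N,ε,s,{F_n})`. -/
noncomputable def wtWN (F : ℕ → Finset G) (Z : Set X) (ε s : ℝ) : ℝ≥0∞ :=
  ⨆ N : ℕ, wtWset F Z N ε s

/-- `W(Z,s,{F_n}) = lim_{ε→0} W(Z,ε,s,{F_n})`. -/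
noncomputable def wtWtot (F : ℕ → Finset G) (Z : Set X) (s : ℝ) : ℝ≥0∞ :=
  ⨆ (ε : ℝ) (_ : 0 < ε), wtWN F Z ε s

/-- The weighted Bowen topological entropy of `Z` along `{F_n}`. -/
noncomputable def wtBowenEnt (F : ℕ → Finset G) (Z : Set X) : ℝ≥0∞ :=
  ⨅ (s : ℝ) (_ : wtWtot F Z s = 0), ENNReal.ofReal s

/-- A finite open cover of `X`. -/
def IsFinOpenCover (𝒰 : Finset (Set X)) : Prop :=
  (∀ U ∈ 𝒰, IsOpen U) ∧ ⋃₀ (𝒰 : Set (Set X)) = Set.univ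

/-- `N(⋁_{g∈F} g⁻¹𝒰)`: the minimal cardinality of a subcover of the refined cover, whose members
are the sets `X(𝐔) = ⋂_{g∈F} g⁻¹ U_g` with `U_g ∈ 𝒰`. -/
noncomputable def coverNum (𝒰 : Finset (Set X)) (F : Finset G) : ℕ :=
  sInf {k : ℕ | ∃ Λ : Finset (G → Set X), Λ.card = k ∧
    (∀ u ∈ Λ, ∀ g ∈ F, u g ∈ 𝒰) ∧
    (⋃ u ∈ Λ, ⋂ g ∈ F, (fun y => g • y) ⁻¹' u g) = Set.univ}

/-- `h_top(G,𝒰) = lim_n (1/|F_n|) log N(⋁_{g∈F_n} g⁻¹𝒰)` (the limit exists by Ornstein–Weiss,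
hence equals the `limsup`). -/
noncomputable def coverTopEnt (F : ℕ → Finset G) (𝒰 : Finset (Set X)) : ℝ :=
  limsup (fun n => Real.log (coverNum 𝒰 (F n)) / (F n).card) atTop

/-- The topological entropy `h_top(X,G)`, the supremum over finite open covers. -/
noncomputable def topEnt (X : Type*) [MetricSpace X] [MulAction G X] (F : ℕ → Finset G) : ℝ≥0∞ :=
  ⨆ (𝒰 : Finset (Set X)) (_ : IsFinOpenCover 𝒰), ENNReal.ofReal (coverTopEnt F 𝒰)

/-- `M(Z,𝒰,N,s,{F_n})`: infimum of `∑_{𝐔∈Λ} exp(-s m(𝐔))` over collections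
`Λ ⊆ ⋃_{j≥N} 𝒲_{F_j}(𝒰)` covering `Z`; an element `𝐔 ∈ 𝒲_{F_j}(𝒰)` is encoded as a pair
`(j, u)` with `u g ∈ 𝒰` for `g ∈ F_j` (and `u g = ∅` elsewhere), `X(𝐔) = ⋂_{g∈F_j} g⁻¹ (u g)`
and `m(𝐔) = |F_j|`. -/
noncomputable def covM (F : ℕ → Finset G) (𝒰 : Finset (Set X)) (Z : Set X) (N : ℕ) (s : ℝ) :
    ℝ≥0∞ :=
  ⨅ (Λ : Set (ℕ × (G → Set X)))
    (_ : ∀ p ∈ Λ, N ≤ p.1 ∧ (∀ g ∈ F p.1, p.2 g ∈ 𝒰) ∧ (∀ g ∉ F p.1, p.2 g = ∅))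
    (_ : Z ⊆ ⋃ p ∈ Λ, ⋂ g ∈ F p.1, (fun y => g • y) ⁻¹' p.2 g),
    ∑' p : Λ, ENNReal.ofReal (Real.exp (-s * ((F (p : ℕ × (G → Set X)).1).card : ℝ)))

/-- `M(Z,𝒰,s,{F_n}) = lim_{N→∞} M(Z,𝒰,N,s,{F_n})`. -/
noncomputable def covMtot (F : ℕ → Finset G) (𝒰 : Finset (Set X)) (Z : Set X) (s : ℝ) : ℝ≥0∞ :=
  ⨆ N : ℕ, covM F 𝒰 Z N s

/-- The cover-based Bowen topological entropy `h^B_top(𝒰,Z,{F_n}) = inf {s : M(Z,𝒰,s,{F_n}) = 0}`. -/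
noncomputable def covBowenEnt (F : ℕ → Finset G) (𝒰 : Finset (Set X)) (Z : Set X) : ℝ≥0∞ :=
  ⨅ (s : ℝ) (_ : covMtot F 𝒰 Z s = 0), ENNReal.ofReal s

/-- `diam(𝒰) = max {diam U : U ∈ 𝒰}`. -/
noncomputable def coverDiam (𝒰 : Finset (Set X)) : ℝ≥0∞ :=
  ⨆ U ∈ 𝒰, EMetric.diam U

end Defs

section MeasureDefs

variable [Group G] [MetricSpace X] [MulAction G X] [MeasurableSpace X]

/-- The quantity `-(1/m) log μ(B)`, with value `+∞` when `μ B = 0`. -/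
noncomputable def locTerm (μ : Measure X) (B : Set X) (m : ℕ) : ℝ≥0∞ :=
  if μ B = 0 then ⊤ else ENNReal.ofReal (-(Real.log ((μ B).toReal)) / (m : ℝ))

/-- The lower local entropy `h̲_μ^{loc}(x,ε,{F_n}) = liminf_n -(1/|F_n|) log μ(B_{F_n}(x,ε))`. -/
noncomputable def lowLoc (μ : Measure X) (F : ℕ → Finset G) (x : X) (ε : ℝ) : ℝ≥0∞ :=
  liminf (fun n => locTerm μ (bowenBall (F n) x ε) (F n).card) atTop

/-- The upper local entropy `limsup_n -(1/|F_n|) log μ(B_{F_n}(x,ε))`. -/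
noncomputable def upLoc (μ : Measure X) (F : ℕ → Finset G) (x : X) (ε : ℝ) : ℝ≥0∞ :=
  limsup (fun n => locTerm μ (bowenBall (F n) x ε) (F n).card) atTop

/-- `h̲_μ^{loc}(x,{F_n}) = lim_{ε→0} h̲_μ^{loc}(x,ε,{F_n})` (a monotone limit, i.e. the
supremum over `ε > 0`). -/
noncomputable def lowLocPt (μ : Measure X) (F : ℕ → Finset G) (x : X) : ℝ≥0∞ :=
  ⨆ (ε : ℝ) (_ : 0 < ε), lowLoc μ F x ε

/-- `h̲_μ^{loc}({F_n}) = ∫_X h̲_μ^{loc}(x,{F_n}) dμ(x)`. -/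
noncomputable def lowLocEnt (μ : Measure X) (F : ℕ → Finset G) : ℝ≥0∞ :=
  ∫⁻ x, lowLocPt μ F x ∂μ

/-- A finite measurable partition of `X`, presented as `P : Fin k → Set X`. -/
def IsMeasPartition {k : ℕ} (P : Fin k → Set X) : Prop :=
  (∀ i, MeasurableSet (P i)) ∧ Pairwise (Function.onFun Disjoint P) ∧ (⋃ i, P i) = Set.univ

/-- The static entropy `H_μ(𝒫_F)` of the join `𝒫_F = ⋁_{g∈F} g⁻¹𝒫`; its atoms are the
nonempty sets `⋂_{g∈F} g⁻¹ P(u g)` (distinct choices `u` yield disjoint atoms, and empty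
atoms contribute `0`). -/
noncomputable def partH (μ : Measure X) {k : ℕ} (P : Fin k → Set X) (F : Finset G) : ℝ :=
  letI := Classical.decEq G
  ∑ u : (↥F → Fin k),
    Real.negMulLog ((μ (⋂ g : ↥F, (fun y => (g : G) • y) ⁻¹' P (u g))).toReal)

/-- `h_μ(G,𝒫) = liminf_n (1/|F_n|) H_μ(𝒫_{F_n})`. -/
noncomputable def partEnt (μ : Measure X) (F : ℕ → Finset G) {k : ℕ} (P : Fin k → Set X) : ℝ :=
  liminf (fun n => partH μ P (F n) / (F n).card) atTop

/-- The measure-theoretic entropy `h_μ(X,G) = sup_𝒫 h_μ(G,𝒫)` (it is independent of the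
Følner sequence used to compute it). -/
noncomputable def measEnt (μ : Measure X) (F : ℕ → Finset G) : ℝ≥0∞ :=
  ⨆ (k : ℕ) (P : Fin k → Set X) (_ : IsMeasPartition P), ENNReal.ofReal (partEnt μ F P)

/-- Ergodicity of the `G`-action w.r.t. `μ`. -/
def IsErgodicGAction (G : Type*) [Group G] [MulAction G X] (μ : Measure X) : Prop :=
  ∀ A : Set X, MeasurableSet A → (∀ g : G, (g • ·) ⁻¹' A = A) → μ A = 0 ∨ μ A = 1

end MeasureDefs
section AuxBasic

variable [Group G] [MetricSpace X] [MulAction G X]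

lemma mem_bowenBall_self {Fn : Finset G} {x : X} {ε : ℝ} (hε : 0 < ε) :
    x ∈ bowenBall Fn x ε := fun g _ => by simpa using hε

lemma bowenBall_mono {Fn : Finset G} {x : X} {ε₁ ε₂ : ℝ} (h : ε₁ ≤ ε₂) :
    bowenBall Fn x ε₁ ⊆ bowenBall Fn x ε₂ := fun y hy g hg => lt_of_lt_of_le (hy g hg) h

lemma bowenBall_tri {Fn : Finset G} {x y z : X} {ε₁ ε₂ : ℝ}
    (hy : y ∈ bowenBall Fn x ε₁) (hz : z ∈ bowenBall Fn x ε₂) :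
    z ∈ bowenBall Fn y (ε₁ + ε₂) := by
  intro g hg
  have h1 := hy g hg
  have h2 := hz g hg
  have := dist_triangle (g • y) (g • x) (g • z)
  rw [dist_comm (g • y) (g • x)] at this
  exact lt_of_le_of_lt this (by linarith)

lemma isOpen_bowenBall [ContinuousConstSMul G X] {Fn : Finset G} {x : X} {ε : ℝ} :
    IsOpen (bowenBall Fn x ε) := by
  have : bowenBall Fn x ε = ⋂ g ∈ Fn, (fun y => g • y) ⁻¹' Metric.ball (g • x) ε := by
    ext y
    simp only [bowenBall, Set.mem_setOf_eq, Set.mem_iInter, Set.mem_preimage,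
      Metric.mem_ball]
    constructor
    · intro h g hg; rw [dist_comm]; exact h g hg
    · intro h g hg; rw [dist_comm]; exact h g hg
  rw [this]
  exact isOpen_biInter_finset fun g _ =>
    Metric.isOpen_ball.preimage (continuous_const_smul g)

lemma exists_finite_bowen_cover [CompactSpace X] [ContinuousConstSMul G X]
    (Fn : Finset G) {ε : ℝ} (hε : 0 < ε) :
    ∃ Q : Finset X, (Set.univ : Set X) ⊆ ⋃ q ∈ Q, bowenBall Fn q ε := by
  obtain ⟨Q, hQ⟩ := isCompact_univ.elim_finite_subcover
    (fun x : X => bowenBall Fn x ε) (fun _ => isOpen_bowenBall)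
    (fun x _ => Set.mem_iUnion.2 ⟨x, mem_bowenBall_self hε⟩)
  exact ⟨Q, hQ⟩

lemma card_tendsto_atTop {F : ℕ → Finset G} (hGrow : GrowthCond F) :
    Tendsto (fun n => ((F n).card : ℝ)) atTop atTop := by
  apply tendsto_atTop_mono' atTop ?_ hGrow
  filter_upwards [eventually_ge_atTop 3] with n hn
  have hn1 : (1 : ℝ) ≤ Real.log n := by
    rw [Real.le_log_iff_exp_le (by positivity : (0:ℝ) < (n:ℝ))]
    calc Real.exp 1 ≤ 3 := by
          nlinarith [Real.exp_one_lt_d9]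
      _ ≤ (n : ℝ) := by exact_mod_cast hn
  exact div_le_self (by positivity) hn1

end AuxBasic
section AuxEasy

variable [Group G] [MetricSpace X] [MulAction G X] [MeasurableSpace X]

lemma locTerm_antitone (μ : Measure X) {B B' : Set X} (hB : B ⊆ B') (hfin : μ B' ≠ ⊤) (m : ℕ) :
    locTerm μ B' m ≤ locTerm μ B m := by
  unfold locTerm
  by_cases h : μ B = 0
  · simp [h]
  · have h' : μ B' ≠ 0 := fun h0 =>
      h (le_antisymm (le_trans (measure_mono hB) h0.le) (zero_le))
    rw [if_neg h, if_neg h']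
    apply ENNReal.ofReal_le_ofReal
    rcases Nat.eq_zero_or_pos m with hm | hm
    · simp [hm]
    · apply div_le_div_of_nonneg_right (c := (m:ℝ)) ?_ (by positivity)
      have h1 : 0 < (μ B).toReal :=
        ENNReal.toReal_pos h (ne_top_of_le_ne_top hfin (measure_mono hB))
      have h2 : (μ B).toReal ≤ (μ B').toReal :=
        ENNReal.toReal_mono hfin (measure_mono hB)
      have := Real.log_le_log h1 h2
      linarith

lemma measure_le_of_locTerm_gt {μ : Measure X} [IsProbabilityMeasure μ] {B : Set X} {m : ℕ}
    {s : ℝ} (h : ENNReal.ofReal s < locTerm μ B m) :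
    μ B ≤ ENNReal.ofReal (Real.exp (-s * m)) := by
  by_cases h0 : μ B = 0
  · simp [h0]
  by_cases hsm : s * m ≤ 0
  · calc μ B ≤ 1 := prob_le_one
      _ ≤ ENNReal.ofReal (Real.exp (-s * m)) := by
          rw [ENNReal.one_le_ofReal]
          apply Real.one_le_exp
          rw [neg_mul]; linarith
  · push_neg at hsm
    have hs : 0 < s := by
      rcases le_or_gt s 0 with hs | hs
      · exact absurd (mul_nonpos_of_nonpos_of_nonneg hs (Nat.cast_nonneg m)) (not_le.2 hsm)
      · exact hs
    have hmpos : (0:ℝ) < m := by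
      rcases Nat.eq_zero_or_pos m with hm | hm
      · exfalso; rw [hm] at hsm; simp at hsm
      · exact_mod_cast hm
    rw [locTerm, if_neg h0] at h
    have hq : s < -(Real.log ((μ B).toReal)) / m := by
      by_contra hq
      push_neg at hq
      have : ENNReal.ofReal (-(Real.log ((μ B).toReal)) / m) ≤ ENNReal.ofReal s :=
        ENNReal.ofReal_le_ofReal hq
      exact absurd h (not_lt.2 this)
    have hmB : 0 < (μ B).toReal := ENNReal.toReal_pos h0 (measure_ne_top μ B)
    have h1 : s * m < -Real.log ((μ B).toReal) := (lt_div_iff₀ hmpos).mp hq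
    have hlog : Real.log ((μ B).toReal) < -(s * m) := by linarith
    have hexp : (μ B).toReal < Real.exp (-(s * m)) := (Real.log_lt_iff_lt_exp hmB).mp hlog
    calc μ B = ENNReal.ofReal ((μ B).toReal) := (ENNReal.ofReal_toReal (measure_ne_top μ B)).symm
      _ ≤ ENNReal.ofReal (Real.exp (-s * m)) := by
          apply ENNReal.ofReal_le_ofReal
          rw [neg_mul]; exact hexp.le

lemma lowLoc_antitone (μ : Measure X) [IsFiniteMeasure μ] (F : ℕ → Finset G) (x : X)
    {ε₁ ε₂ : ℝ} (h : ε₁ ≤ ε₂) : lowLoc μ F x ε₂ ≤ lowLoc μ F x ε₁ := by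
  refine Filter.liminf_le_liminf (Filter.Eventually.of_forall fun n => ?_) ?_ ?_
  · exact locTerm_antitone μ (bowenBall_mono h) (measure_ne_top μ _) _
  · isBoundedDefault
  · isBoundedDefault

lemma lowLocEnt_le_ofReal {F : ℕ → Finset G} {K : Set X} {s : ℝ}
    (μ : Measure X) [IsProbabilityMeasure μ] (hμK : μ K = 1) (hKm : MeasurableSet K)
    (hM : ∀ ε : ℝ, 0 < ε → ∀ N : ℕ, ballM F K N ε s = 0) :
    lowLocEnt μ F ≤ ENNReal.ofReal s := by
  classical
  set A : ℕ → ℕ → Set X := fun j N =>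
    {x | x ∈ K ∧ ∀ n ≥ N, μ (bowenBall (F n) x (1/((j:ℝ)+1))) ≤
      ENNReal.ofReal (Real.exp (-s * ((F n).card : ℝ)))} with hA
  have hεj : ∀ j : ℕ, (0:ℝ) < 1/((j:ℝ)+1) := fun j => by positivity
  -- each A j N is null
  have step1 : ∀ j N, μ (A j N) = 0 := by
    intro j N
    set ε : ℝ := 1/((j:ℝ)+1)
    by_contra hne
    have hfin : μ (A j N) ≠ ⊤ := measure_ne_top μ _
    have hpos : 0 < μ (A j N) := pos_iff_ne_zero.2 hne
    have hhalf : μ (A j N) / 2 < μ (A j N) := ENNReal.half_lt_self hne hfin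
    have hc : 0 < μ (A j N) / 2 := ENNReal.div_pos hne (by norm_num)
    have h0 : ballM F K N (ε/2) s < μ (A j N) / 2 := by
      rw [hM (ε/2) (by positivity) N]; exact hc
    simp only [ballM, iInf_lt_iff] at h0
    obtain ⟨I, hIc, hN, hcov, hsum⟩ := h0
    have key : μ (A j N) ≤ ∑' p : I, ENNReal.ofReal (Real.exp (-s * ((F (p:X×ℕ).2).card : ℝ))) := by
      calc μ (A j N) ≤ ∑' p : I, μ (bowenBall (F (p:X×ℕ).2) (p:X×ℕ).1 (ε/2) ∩ A j N) := by
            refine le_trans (measure_mono ?_) (measure_biUnion_le μ hIc (fun p => bowenBall (F p.2) p.1 (ε/2) ∩ A j N))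
            intro x hx
            obtain ⟨p, hpI, hpb⟩ := Set.mem_iUnion₂.1 (hcov hx.1)
            exact Set.mem_iUnion₂.2 ⟨p, hpI, hpb, hx⟩
        _ ≤ _ := by
            apply ENNReal.tsum_le_tsum
            intro p
            by_cases hemp : (bowenBall (F (p:X×ℕ).2) (p:X×ℕ).1 (ε/2) ∩ A j N).Nonempty
            · obtain ⟨y, hyb, hyA⟩ := hemp
              calc μ (bowenBall (F (p:X×ℕ).2) (p:X×ℕ).1 (ε/2) ∩ A j N)
                  ≤ μ (bowenBall (F (p:X×ℕ).2) y ε) := by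
                    apply measure_mono
                    intro z hz
                    have := bowenBall_tri hyb hz.1
                    rwa [show ε/2 + ε/2 = ε by ring] at this
                _ ≤ ENNReal.ofReal (Real.exp (-s * ((F (p:X×ℕ).2).card : ℝ))) :=
                    hyA.2 (p:X×ℕ).2 (hN _ p.2)
            · rw [Set.not_nonempty_iff_eq_empty] at hemp
              rw [hemp]; simp
    exact absurd (lt_of_le_of_lt key hsum) (not_lt.2 (le_trans hhalf.le le_rfl))
  -- pointwise inclusion
  have step2 : {x | ¬ lowLocPt μ F x ≤ ENNReal.ofReal s} ⊆ Kᶜ ∪ ⋃ j, ⋃ N, A j N := by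
    intro x hx
    rw [Set.mem_setOf_eq, not_le] at hx
    by_cases hxK : x ∈ K
    · right
      simp only [lowLocPt, lt_iSup_iff] at hx
      obtain ⟨ε, hε, hlt⟩ := hx
      obtain ⟨j, hj⟩ := exists_nat_one_div_lt hε
      have hlt' : ENNReal.ofReal s < lowLoc μ F x (1/((j:ℝ)+1)) :=
        lt_of_lt_of_le hlt (lowLoc_antitone μ F x hj.le)
      have hev := Filter.eventually_lt_of_lt_liminf hlt'
      obtain ⟨N, hNev⟩ := Filter.eventually_atTop.1 hev
      refine Set.mem_iUnion.2 ⟨j, Set.mem_iUnion.2 ⟨N, hxK, fun n hn => ?_⟩⟩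
      exact measure_le_of_locTerm_gt (hNev n hn)
    · exact Or.inl hxK
  have hnull : μ (Kᶜ ∪ ⋃ j, ⋃ N, A j N) = 0 := by
    have h1 : μ Kᶜ = 0 := by
      have := measure_compl hKm (measure_ne_top μ K)
      rw [hμK, measure_univ] at this
      simp [this]
    have h2 : μ (⋃ j, ⋃ N, A j N) = 0 := by
      refine measure_iUnion_null fun j => measure_iUnion_null fun N => step1 j N
    exact measure_union_null h1 h2
  have hae : ∀ᵐ x ∂μ, lowLocPt μ F x ≤ ENNReal.ofReal s :=
    measure_mono_null step2 hnull
  calc lowLocEnt μ F = ∫⁻ x, lowLocPt μ F x ∂μ := rfl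
    _ ≤ ∫⁻ _, ENNReal.ofReal s ∂μ := lintegral_mono_ae hae
    _ = ENNReal.ofReal s := by rw [lintegral_const, measure_univ, mul_one]

end AuxEasy
section AuxW

variable [Group G] [MetricSpace X] [MulAction G X]

lemma indicator_tsum_eq_of_subset {α : Type*} {J I : Set α} (hJI : J ⊆ I) (d : α → ℝ≥0∞)
    (hd : ∀ p, p ∉ J → d p = 0) : ∑' p : J, d (p : α) = ∑' p : I, d (p : α) := by
  rw [tsum_subtype, tsum_subtype]
  congr 1
  funext p
  by_cases hpJ : p ∈ J
  · rw [Set.indicator_of_mem hpJ, Set.indicator_of_mem (hJI hpJ)]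
  · rw [Set.indicator_of_notMem hpJ]
    by_cases hpI : p ∈ I
    · rw [Set.indicator_of_mem hpI, hd p hpJ]
    · rw [Set.indicator_of_notMem hpI]

lemma wtW_le_cost {F : ℕ → Finset G} {f : X → ℝ≥0∞} {N : ℕ} {ε s : ℝ}
    (I : Set (X × ℕ)) (c : X × ℕ → ℝ≥0∞) (hIc : I.Countable)
    (hcond : ∀ p ∈ I, N ≤ p.2 ∧ 0 < c p ∧ c p < ⊤)
    (hcov : ∀ x : X, f x ≤ ∑' p : I, c (p : X × ℕ) *
        (bowenBall (F (p : X × ℕ).2) (p : X × ℕ).1 ε).indicator (fun _ => (1 : ℝ≥0∞)) x) :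
    wtW F f N ε s ≤ ∑' p : I, c (p : X × ℕ) *
      ENNReal.ofReal (Real.exp (-s * ((F (p : X × ℕ).2).card : ℝ))) := by
  exact le_trans (iInf_le _ I) (le_trans (iInf_le _ c) (le_trans (iInf_le _ hIc)
    (le_trans (iInf_le _ hcond) (iInf_le _ hcov))))

lemma wtW_mono {F : ℕ → Finset G} {f g : X → ℝ≥0∞} {N : ℕ} {ε s : ℝ}
    (h : ∀ x, f x ≤ g x) : wtW F f N ε s ≤ wtW F g N ε s := by
  refine le_iInf fun I => le_iInf fun c => le_iInf fun hIc => le_iInf fun hcond =>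
    le_iInf fun hcov => ?_
  exact wtW_le_cost I c hIc hcond (fun x => (h x).trans (hcov x))

lemma wtW_zero {F : ℕ → Finset G} {f : X → ℝ≥0∞} {N : ℕ} {ε s : ℝ}
    (h : ∀ x, f x = 0) : wtW F f N ε s = 0 := by
  refine le_antisymm ?_ (zero_le)
  have := wtW_le_cost (F := F) (f := f) (N := N) (ε := ε) (s := s)
    (∅ : Set (X × ℕ)) (fun _ => 1) Set.countable_empty (fun p hp => absurd hp (Set.notMem_empty p))
    (fun x => by rw [h x]; exact zero_le)
  simpa using this

lemma wtW_le_single {F : ℕ → Finset G} {f : X → ℝ≥0∞} {N n : ℕ} {ε s : ℝ} {x : X}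
    (hn : N ≤ n)
    (h : ∀ y, f y ≤ (bowenBall (F n) x ε).indicator (fun _ => (1 : ℝ≥0∞)) y) :
    wtW F f N ε s ≤ ENNReal.ofReal (Real.exp (-s * ((F n).card : ℝ))) := by
  have key := wtW_le_cost (F := F) (f := f) (N := N) (ε := ε) (s := s)
    ({(x, n)} : Set (X × ℕ)) (fun _ => 1) (Set.countable_singleton _)
    (fun p hp => by
      rw [Set.mem_singleton_iff] at hp
      subst hp
      exact ⟨hn, by norm_num, by norm_num⟩)
    (fun y => by
      have h1 : (∑' p : ({(x, n)} : Set (X × ℕ)), (fun _ => (1:ℝ≥0∞)) (p : X × ℕ) *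
          (bowenBall (F (p : X × ℕ).2) (p : X × ℕ).1 ε).indicator (fun _ => (1:ℝ≥0∞)) y)
          = (1:ℝ≥0∞) * (bowenBall (F n) x ε).indicator (fun _ => (1:ℝ≥0∞)) y :=
        tsum_singleton ((x, n) : X × ℕ) (fun p : X × ℕ => (1:ℝ≥0∞) *
          (bowenBall (F p.2) p.1 ε).indicator (fun _ => (1:ℝ≥0∞)) y)
      rw [h1, one_mul]
      exact h y)
  have h2 : (∑' p : ({(x, n)} : Set (X × ℕ)), (fun _ => (1:ℝ≥0∞)) (p : X × ℕ) *
      ENNReal.ofReal (Real.exp (-s * ((F (p : X × ℕ).2).card : ℝ))))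
      = (1:ℝ≥0∞) * ENNReal.ofReal (Real.exp (-s * ((F n).card : ℝ))) :=
    tsum_singleton ((x, n) : X × ℕ) (fun p : X × ℕ => (1:ℝ≥0∞) *
      ENNReal.ofReal (Real.exp (-s * ((F p.2).card : ℝ))))
  rw [h2, one_mul] at key
  exact key

/-- The greedy covering lemma: a single-level weighted Vitali argument. -/
lemma greedy_cover {Fn : Finset G} {ε : ℝ} (γ : ℝ≥0∞) (hγ0 : γ ≠ 0) (hγt : γ ≠ ⊤) :
    ∀ (m : ℕ) (u : X → ℝ≥0∞) (Z : Set X), (∑' x, u x) ≤ (m : ℝ≥0∞) * γ →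
      (∀ z ∈ Z, γ ≤ ∑' x, u x * (bowenBall Fn x ε).indicator (fun _ => (1:ℝ≥0∞)) z) →
      ∃ Y : Finset X, Y.card ≤ m ∧ Z ⊆ ⋃ y ∈ Y, bowenBall Fn y (2*ε) := by
  intro m
  induction m with
  | zero =>
    intro u Z htot hcov
    refine ⟨∅, le_rfl, fun z hz => ?_⟩
    exfalso
    have h1 := hcov z hz
    have h2 : ∑' x, u x * (bowenBall Fn x ε).indicator (fun _ => (1:ℝ≥0∞)) z ≤ ∑' x, u x := by
      refine ENNReal.tsum_le_tsum fun x => ?_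
      calc u x * (bowenBall Fn x ε).indicator (fun _ => (1:ℝ≥0∞)) z ≤ u x * 1 := by
            refine mul_le_mul_right ?_ _
            by_cases hzb : z ∈ bowenBall Fn x ε <;> simp [hzb]
        _ = u x := mul_one _
    rw [Nat.cast_zero, zero_mul] at htot
    exact hγ0 (le_zero_iff.mp (h1.trans (h2.trans htot)))
  | succ m ih =>
    intro u Z htot hcov
    rcases Set.eq_empty_or_nonempty Z with hZ | ⟨z, hz⟩
    · exact ⟨∅, by simp, by simp [hZ]⟩
    classical
    set u' : X → ℝ≥0∞ := fun x => if z ∈ bowenBall Fn x ε then 0 else u x with hu'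
    set sel : X → ℝ≥0∞ := fun x => if z ∈ bowenBall Fn x ε then u x else 0 with hsel
    have hsum_split : ∑' x, u x = (∑' x, u' x) + ∑' x, sel x := by
      rw [← ENNReal.tsum_add]
      refine tsum_congr fun x => ?_
      by_cases hx : z ∈ bowenBall Fn x ε <;> simp [u', sel, hx]
    have hsel_ge : γ ≤ ∑' x, sel x := by
      refine le_trans (hcov z hz) (le_of_eq (tsum_congr fun x => ?_))
      by_cases hx : z ∈ bowenBall Fn x ε
      · simp [sel, hx, Set.indicator_of_mem hx]
      · simp [sel, hx, Set.indicator_of_notMem hx]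
    have htot' : ∑' x, u' x ≤ (m : ℝ≥0∞) * γ := by
      have h1 : (∑' x, u' x) + γ ≤ (m : ℝ≥0∞) * γ + γ := by
        calc (∑' x, u' x) + γ ≤ (∑' x, u' x) + ∑' x, sel x := add_le_add_right hsel_ge _
          _ = ∑' x, u x := hsum_split.symm
          _ ≤ ((m+1 : ℕ) : ℝ≥0∞) * γ := htot
          _ = (m : ℝ≥0∞) * γ + γ := by
              push_cast
              ring
      exact (ENNReal.add_le_add_iff_right hγt).mp h1
    have hcov' : ∀ z' ∈ Z \ bowenBall Fn z (2*ε), γ ≤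
        ∑' x, u' x * (bowenBall Fn x ε).indicator (fun _ => (1:ℝ≥0∞)) z' := by
      intro z' hz'
      refine le_trans (hcov z' hz'.1) (le_of_eq (tsum_congr fun x => ?_))
      by_cases hx : z ∈ bowenBall Fn x ε
      · have hz'x : z' ∉ bowenBall Fn x ε := by
          intro hz''
          apply hz'.2
          have := bowenBall_tri hx hz''
          rwa [show ε + ε = 2*ε by ring] at this
        rw [Set.indicator_of_notMem hz'x, mul_zero, mul_zero]
      · simp only [u', if_neg hx]
    obtain ⟨Y, hYcard, hYcov⟩ := ih u' (Z \ bowenBall Fn z (2*ε)) htot' hcov'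
    refine ⟨insert z Y, ?_, ?_⟩
    · exact (Finset.card_insert_le _ _).trans (by omega)
    · intro w hw
      by_cases hwz : w ∈ bowenBall Fn z (2*ε)
      · exact Set.mem_biUnion (Finset.mem_insert_self z Y) hwz
      · obtain ⟨y, hy, hwy⟩ := Set.mem_iUnion₂.1 (hYcov ⟨hw, hwz⟩)
        exact Set.mem_biUnion (Finset.mem_insert_of_mem hy) hwy

end AuxW
section AuxW2

variable [Group G] [MetricSpace X] [MulAction G X]

lemma exists_cover_of_wtW_lt {F : ℕ → Finset G} {f : X → ℝ≥0∞} {N : ℕ} {ε s : ℝ} {b : ℝ≥0∞}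
    (hlt : wtW F f N ε s < b) :
    ∃ (I : Set (X × ℕ)) (c : X × ℕ → ℝ≥0∞), I.Countable ∧
      (∀ p ∈ I, N ≤ p.2 ∧ 0 < c p ∧ c p < ⊤) ∧
      (∀ x : X, f x ≤ ∑' p : I, c (p : X × ℕ) *
        (bowenBall (F (p : X × ℕ).2) (p : X × ℕ).1 ε).indicator (fun _ => (1 : ℝ≥0∞)) x) ∧
      (∑' p : I, c (p : X × ℕ) *
        ENNReal.ofReal (Real.exp (-s * ((F (p : X × ℕ).2).card : ℝ)))) < b := by
  simp only [wtW, iInf_lt_iff] at hlt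
  obtain ⟨I, c, hIc, hcond, hcov, hcost⟩ := hlt
  exact ⟨I, c, hIc, hcond, hcov, hcost⟩

lemma wtW_add_le {F : ℕ → Finset G} {f g₁ g₂ : X → ℝ≥0∞} {N : ℕ} {ε s : ℝ}
    (h : ∀ x, f x ≤ g₁ x + g₂ x) :
    wtW F f N ε s ≤ wtW F g₁ N ε s + wtW F g₂ N ε s := by
  classical
  by_cases h1 : wtW F g₁ N ε s = ⊤
  · rw [h1, top_add]; exact le_top
  by_cases h2 : wtW F g₂ N ε s = ⊤
  · rw [h2, add_top]; exact le_top
  refine ENNReal.le_of_forall_pos_le_add fun η hη _ => ?_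
  have hη2 : ((η : ℝ≥0∞) / 2) ≠ 0 := by
    simp only [ne_eq, ENNReal.div_eq_zero_iff, ENNReal.coe_eq_zero, ENNReal.ofNat_ne_top,
      or_false]
    exact hη.ne'
  obtain ⟨I₁, c₁, hIc₁, hcond₁, hcov₁, hcost₁⟩ :=
    exists_cover_of_wtW_lt (ENNReal.lt_add_right h1 hη2)
  obtain ⟨I₂, c₂, hIc₂, hcond₂, hcov₂, hcost₂⟩ :=
    exists_cover_of_wtW_lt (ENNReal.lt_add_right h2 hη2)
  set c : X × ℕ → ℝ≥0∞ := fun p => I₁.indicator c₁ p + I₂.indicator c₂ p with hc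
  have key := wtW_le_cost (F := F) (f := f) (N := N) (ε := ε) (s := s) (I₁ ∪ I₂) c
    (hIc₁.union hIc₂)
    (fun p hp => by
      constructor
      · rcases (Set.mem_union _ _ _).1 hp with hp1 | hp1
        · exact (hcond₁ p hp1).1
        · exact (hcond₂ p hp1).1
      constructor
      · rcases (Set.mem_union _ _ _).1 hp with hp1 | hp1
        · calc (0:ℝ≥0∞) < c₁ p := (hcond₁ p hp1).2.1
            _ = I₁.indicator c₁ p := (Set.indicator_of_mem hp1 c₁).symm
            _ ≤ c p := le_self_add
        · calc (0:ℝ≥0∞) < c₂ p := (hcond₂ p hp1).2.1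
            _ = I₂.indicator c₂ p := (Set.indicator_of_mem hp1 c₂).symm
            _ ≤ c p := le_add_self
      · have e1 : I₁.indicator c₁ p < ⊤ := by
          by_cases hm : p ∈ I₁
          · rw [Set.indicator_of_mem hm]; exact (hcond₁ p hm).2.2
          · rw [Set.indicator_of_notMem hm]; exact ENNReal.zero_lt_top
        have e2 : I₂.indicator c₂ p < ⊤ := by
          by_cases hm : p ∈ I₂
          · rw [Set.indicator_of_mem hm]; exact (hcond₂ p hm).2.2
          · rw [Set.indicator_of_notMem hm]; exact ENNReal.zero_lt_top
        exact ENNReal.add_lt_top.2 ⟨e1, e2⟩)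
    (fun x => by
      have e1 : (∑' p : I₁, c₁ (p : X × ℕ) *
          (bowenBall (F (p : X × ℕ).2) (p : X × ℕ).1 ε).indicator (fun _ => (1:ℝ≥0∞)) x)
          = ∑' p : (I₁ ∪ I₂ : Set (X × ℕ)), I₁.indicator c₁ (p : X × ℕ) *
          (bowenBall (F (p : X × ℕ).2) (p : X × ℕ).1 ε).indicator (fun _ => (1:ℝ≥0∞)) x := by
        rw [← indicator_tsum_eq_of_subset Set.subset_union_left
          (fun p => I₁.indicator c₁ p *
            (bowenBall (F p.2) p.1 ε).indicator (fun _ => (1:ℝ≥0∞)) x)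
          (fun p hp => by simp [Set.indicator_of_notMem hp])]
        exact tsum_congr fun p => by rw [Set.indicator_of_mem p.2]
      have e2 : (∑' p : I₂, c₂ (p : X × ℕ) *
          (bowenBall (F (p : X × ℕ).2) (p : X × ℕ).1 ε).indicator (fun _ => (1:ℝ≥0∞)) x)
          = ∑' p : (I₁ ∪ I₂ : Set (X × ℕ)), I₂.indicator c₂ (p : X × ℕ) *
          (bowenBall (F (p : X × ℕ).2) (p : X × ℕ).1 ε).indicator (fun _ => (1:ℝ≥0∞)) x := by
        rw [← indicator_tsum_eq_of_subset Set.subset_union_right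
          (fun p => I₂.indicator c₂ p *
            (bowenBall (F p.2) p.1 ε).indicator (fun _ => (1:ℝ≥0∞)) x)
          (fun p hp => by simp [Set.indicator_of_notMem hp])]
        exact tsum_congr fun p => by rw [Set.indicator_of_mem p.2]
      calc f x ≤ g₁ x + g₂ x := h x
        _ ≤ _ := by
            refine le_trans (add_le_add (hcov₁ x) (hcov₂ x)) (le_of_eq ?_)
            rw [e1, e2, ← ENNReal.tsum_add]
            refine tsum_congr fun p => ?_
            simp only [hc]
            rw [add_mul])
  refine le_trans key ?_
  have ecost : (∑' p : (I₁ ∪ I₂ : Set (X × ℕ)), c (p : X × ℕ) *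
      ENNReal.ofReal (Real.exp (-s * ((F (p : X × ℕ).2).card : ℝ))))
      = (∑' p : I₁, c₁ (p : X × ℕ) * ENNReal.ofReal (Real.exp (-s * ((F (p : X × ℕ).2).card : ℝ))))
      + ∑' p : I₂, c₂ (p : X × ℕ) * ENNReal.ofReal (Real.exp (-s * ((F (p : X × ℕ).2).card : ℝ))) := by
    have e1 : (∑' p : I₁, c₁ (p : X × ℕ) *
        ENNReal.ofReal (Real.exp (-s * ((F (p : X × ℕ).2).card : ℝ))))
        = ∑' p : (I₁ ∪ I₂ : Set (X × ℕ)), I₁.indicator c₁ (p : X × ℕ) *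
        ENNReal.ofReal (Real.exp (-s * ((F (p : X × ℕ).2).card : ℝ))) := by
      rw [← indicator_tsum_eq_of_subset Set.subset_union_left
        (fun p => I₁.indicator c₁ p * ENNReal.ofReal (Real.exp (-s * ((F p.2).card : ℝ))))
        (fun p hp => by simp [Set.indicator_of_notMem hp])]
      exact tsum_congr fun p => by rw [Set.indicator_of_mem p.2]
    have e2 : (∑' p : I₂, c₂ (p : X × ℕ) *
        ENNReal.ofReal (Real.exp (-s * ((F (p : X × ℕ).2).card : ℝ))))
        = ∑' p : (I₁ ∪ I₂ : Set (X × ℕ)), I₂.indicator c₂ (p : X × ℕ) *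
        ENNReal.ofReal (Real.exp (-s * ((F (p : X × ℕ).2).card : ℝ))) := by
      rw [← indicator_tsum_eq_of_subset Set.subset_union_right
        (fun p => I₂.indicator c₂ p * ENNReal.ofReal (Real.exp (-s * ((F p.2).card : ℝ))))
        (fun p hp => by simp [Set.indicator_of_notMem hp])]
      exact tsum_congr fun p => by rw [Set.indicator_of_mem p.2]
    rw [e1, e2, ← ENNReal.tsum_add]
    refine tsum_congr fun p => ?_
    simp only [hc]
    rw [add_mul]
  rw [ecost]
  calc _ ≤ (wtW F g₁ N ε s + (η:ℝ≥0∞)/2) + (wtW F g₂ N ε s + (η:ℝ≥0∞)/2) :=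
        add_le_add hcost₁.le hcost₂.le
    _ = wtW F g₁ N ε s + wtW F g₂ N ε s + η := by
        rw [add_add_add_comm, ENNReal.add_halves]

lemma wtW_smul_le {F : ℕ → Finset G} {f : X → ℝ≥0∞} {N : ℕ} {ε s : ℝ} {a : ℝ≥0∞}
    (ha0 : a ≠ 0) (hat : a ≠ ⊤) :
    wtW F (fun x => a * f x) N ε s ≤ a * wtW F f N ε s := by
  by_cases htop : wtW F f N ε s = ⊤
  · rw [htop, ENNReal.mul_top ha0]; exact le_top
  refine ENNReal.le_of_forall_pos_le_add fun η hη _ => ?_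
  have hηa : ((η : ℝ≥0∞) / a) ≠ 0 := by
    simp only [ne_eq, ENNReal.div_eq_zero_iff, ENNReal.coe_eq_zero, hat, or_false]
    exact hη.ne'
  obtain ⟨I, c, hIc, hcond, hcov, hcost⟩ :=
    exists_cover_of_wtW_lt (ENNReal.lt_add_right htop hηa)
  have key := wtW_le_cost (F := F) (f := fun x => a * f x) (N := N) (ε := ε) (s := s) I
    (fun p => a * c p) hIc
    (fun p hp => ⟨(hcond p hp).1, by
        exact ENNReal.mul_pos ha0 (hcond p hp).2.1.ne', by
        exact ENNReal.mul_lt_top hat.lt_top (hcond p hp).2.2⟩)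
    (fun x => by
      calc a * f x ≤ a * ∑' p : I, c (p : X × ℕ) *
          (bowenBall (F (p : X × ℕ).2) (p : X × ℕ).1 ε).indicator (fun _ => (1:ℝ≥0∞)) x :=
            mul_le_mul_right (hcov x) a
        _ = _ := by
            rw [← ENNReal.tsum_mul_left]
            exact tsum_congr fun p => by ring)
  refine le_trans key ?_
  calc (∑' p : I, a * c (p : X × ℕ) *
      ENNReal.ofReal (Real.exp (-s * ((F (p : X × ℕ).2).card : ℝ))))
      = a * ∑' p : I, c (p : X × ℕ) *
        ENNReal.ofReal (Real.exp (-s * ((F (p : X × ℕ).2).card : ℝ))) := by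
        rw [← ENNReal.tsum_mul_left]
        exact tsum_congr fun p => by ring
    _ ≤ a * (wtW F f N ε s + (η:ℝ≥0∞)/a) := mul_le_mul_right hcost.le a
    _ = a * wtW F f N ε s + η := by
        rw [mul_add, ENNReal.mul_div_cancel ha0 hat]

lemma wtW_smul {F : ℕ → Finset G} {f : X → ℝ≥0∞} {N : ℕ} {ε s : ℝ} {a : ℝ≥0∞}
    (ha0 : a ≠ 0) (hat : a ≠ ⊤) :
    wtW F (fun x => a * f x) N ε s = a * wtW F f N ε s := by
  refine le_antisymm (wtW_smul_le ha0 hat) ?_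
  have h2 := wtW_smul_le (F := F) (f := fun x => a * f x) (N := N) (ε := ε) (s := s)
    (a := a⁻¹) (ENNReal.inv_ne_zero.2 hat) (ENNReal.inv_ne_top.2 ha0)
  have h3 : wtW F f N ε s ≤ a⁻¹ * wtW F (fun x => a * f x) N ε s := by
    refine le_trans (le_of_eq ?_) h2
    congr 1
    funext x
    rw [← mul_assoc, ENNReal.inv_mul_cancel ha0 hat, one_mul]
  calc a * wtW F f N ε s ≤ a * (a⁻¹ * wtW F (fun x => a * f x) N ε s) :=
        mul_le_mul_right h3 a
    _ = _ := by rw [← mul_assoc, ENNReal.mul_inv_cancel ha0 hat, one_mul]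

lemma wtW_ne_top [CompactSpace X] [ContinuousConstSMul G X]
    {F : ℕ → Finset G} {f : X → ℝ≥0∞} {N : ℕ} {ε s : ℝ} (hε : 0 < ε) {M : ℝ≥0∞}
    (hM : M ≠ ⊤) (h : ∀ x, f x ≤ M) : wtW F f N ε s ≠ ⊤ := by
  classical
  obtain ⟨Q, hQ⟩ := exists_finite_bowen_cover (X := X) (F N) hε
  set I : Set (X × ℕ) := (↑Q : Set X) ×ˢ ({N} : Set ℕ) with hI
  have hIfin : I.Finite := (Q.finite_toSet).prod (Set.finite_singleton N)
  have key := wtW_le_cost (F := F) (f := f) (N := N) (ε := ε) (s := s) I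
    (fun _ => M + 1) hIfin.countable
    (fun p hp => ⟨le_of_eq hp.2.symm, lt_of_lt_of_le zero_lt_one le_add_self, by
      exact ENNReal.add_lt_top.2 ⟨hM.lt_top, ENNReal.one_lt_top⟩⟩)
    (fun x => by
      obtain ⟨q, hqQ, hqx⟩ := Set.mem_iUnion₂.1 (hQ (Set.mem_univ x))
      have hmem : ((q, N) : X × ℕ) ∈ I := ⟨hqQ, rfl⟩
      calc f x ≤ M := h x
        _ ≤ (M + 1) * (bowenBall (F N) q ε).indicator (fun _ => (1:ℝ≥0∞)) x := by
            rw [Set.indicator_of_mem hqx, mul_one]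
            exact le_add_right le_rfl
        _ ≤ _ := ENNReal.le_tsum (⟨(q, N), hmem⟩ : I))
  refine ne_top_of_le_ne_top ?_ key
  haveI := hIfin.fintype
  rw [tsum_fintype]
  refine (ENNReal.sum_lt_top.2 fun p _ => ?_).ne
  exact ENNReal.mul_lt_top (ENNReal.add_lt_top.2 ⟨hM.lt_top, ENNReal.one_lt_top⟩)
    ENNReal.ofReal_lt_top

end AuxW2
section AuxTele

lemma sum_range_ite_telescope (N : ℕ) :
    ∀ M : ℕ, (∑ n ∈ Finset.range M, (if N ≤ n then (1:ℝ)/(2*((n:ℝ)+1)*((n:ℝ)+2)) else 0))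
      ≤ 1/(2*((N:ℝ)+1)) := by
  have key : ∀ M : ℕ, (∑ n ∈ Finset.range M, (if N ≤ n then (1:ℝ)/(2*((n:ℝ)+1)*((n:ℝ)+2)) else 0))
      = if N < M then 1/(2*((N:ℝ)+1)) - 1/(2*((M:ℝ)+1)) else 0 := by
    intro M
    induction M with
    | zero => simp
    | succ M ih =>
      rw [Finset.sum_range_succ, ih]
      rcases lt_trichotomy M N with hMN | hMN | hMN
      · have h1 : ¬ N < M := by omega
        have h2 : ¬ N ≤ M := by omega
        have h3 : ¬ N < M + 1 := by omega
        simp only [if_neg h1, if_neg h2, if_neg (by exact_mod_cast h3)]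
        norm_num
      · subst hMN
        have h1 : ¬ M < M := lt_irrefl M
        have h3 : M < M + 1 := Nat.lt_succ_self M
        simp only [if_neg h1, if_pos le_rfl, if_pos h3]
        push_cast
        field_simp
        ring
      · have h2 : N ≤ M := hMN.le
        have h3 : N < M + 1 := by omega
        simp only [if_pos hMN, if_pos h2, if_pos h3]
        push_cast
        field_simp
        ring
  intro M
  rw [key M]
  rcases lt_or_ge N M with h | h
  · rw [if_pos h]
    have : (0:ℝ) ≤ 1/(2*((M:ℝ)+1)) := by positivity
    linarith
  · rw [if_neg (not_lt.2 h)]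
    positivity

lemma tsum_gamma_le :
    (∑' n : ℕ, ENNReal.ofReal ((1:ℝ)/(2*((n:ℝ)+1)*((n:ℝ)+2)))) ≤ ENNReal.ofReal (1/2) := by
  refine ENNReal.tsum_le_of_sum_range_le fun M => ?_
  have h1 : (∑ n ∈ Finset.range M, ENNReal.ofReal ((1:ℝ)/(2*((n:ℝ)+1)*((n:ℝ)+2))))
      = ENNReal.ofReal (∑ n ∈ Finset.range M, (1:ℝ)/(2*((n:ℝ)+1)*((n:ℝ)+2))) := by
    rw [ENNReal.ofReal_sum_of_nonneg]
    intro n _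
    positivity
  rw [h1]
  apply ENNReal.ofReal_le_ofReal
  have h2 := sum_range_ite_telescope 0 M
  simp only [Nat.zero_le, if_pos, Nat.cast_zero] at h2
  norm_num at h2 ⊢
  convert h2 using 1

lemma tsum_tail_le (N : ℕ) :
    (∑' n : ℕ, (if N ≤ n then ENNReal.ofReal ((1:ℝ)/(2*((n:ℝ)+1)*((n:ℝ)+2))) else 0))
      ≤ ENNReal.ofReal (1/(2*((N:ℝ)+1))) := by
  refine ENNReal.tsum_le_of_sum_range_le fun M => ?_
  have h1 : (∑ n ∈ Finset.range M, (if N ≤ n then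
        ENNReal.ofReal ((1:ℝ)/(2*((n:ℝ)+1)*((n:ℝ)+2))) else 0))
      = ENNReal.ofReal (∑ n ∈ Finset.range M,
        (if N ≤ n then (1:ℝ)/(2*((n:ℝ)+1)*((n:ℝ)+2)) else 0)) := by
    rw [ENNReal.ofReal_sum_of_nonneg]
    · refine Finset.sum_congr rfl fun n _ => ?_
      by_cases h : N ≤ n <;> simp [h]
    · intro n _
      by_cases h : N ≤ n <;> simp [h]
      positivity
  rw [h1]
  exact ENNReal.ofReal_le_ofReal (sum_range_ite_telescope N M)

end AuxTele

section AuxGrow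

variable [Group G]

lemma growth_exp_bound {F : ℕ → Finset G} (hGrow : GrowthCond F) {δ : ℝ} (hδ : 0 < δ) :
    ∃ N₀ : ℕ, ∀ n ≥ N₀, Real.exp (-δ * ((F n).card : ℝ)) ≤ 1/(2*((n:ℝ)+1)*((n:ℝ)+2)) := by
  obtain ⟨N', hN'⟩ := (eventually_atTop).1 ((tendsto_atTop.1 hGrow) (6/δ))
  refine ⟨max N' 2, fun n hn => ?_⟩
  have hn2 : (2:ℕ) ≤ n := le_trans (le_max_right _ _) hn
  have hnN' := le_trans (le_max_left _ _) hn
  have hn1 : (1:ℝ) < n := by exact_mod_cast (by omega : (1:ℕ) < n)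
  have hlog : 0 < Real.log n := Real.log_pos hn1
  have hcard : 6 * Real.log n ≤ δ * ((F n).card : ℝ) := by
    have h := hN' n hnN'
    rw [div_le_div_iff₀ hδ hlog] at h
    linarith
  have hn2' : (2:ℝ) ≤ (n:ℝ) := by exact_mod_cast hn2
  have hP : (0:ℝ) < 2*((n:ℝ)+1)*((n:ℝ)+2) := by positivity
  have hPle : 2*((n:ℝ)+1)*((n:ℝ)+2) ≤ (n:ℝ)^6 := by
    have h1 : (n:ℝ)+1 ≤ 2*n := by linarith
    have h2 : (n:ℝ)+2 ≤ 2*n := by linarith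
    have h3 : 2*((n:ℝ)+1)*((n:ℝ)+2) ≤ 8*(n:ℝ)^2 := by nlinarith
    have h4 : (4:ℝ) ≤ (n:ℝ)^2 := by nlinarith
    have h5 : (16:ℝ) ≤ (n:ℝ)^4 := by nlinarith
    nlinarith
  have hlogP : Real.log (2*((n:ℝ)+1)*((n:ℝ)+2)) ≤ 6 * Real.log n := by
    calc Real.log (2*((n:ℝ)+1)*((n:ℝ)+2)) ≤ Real.log ((n:ℝ)^6) := Real.log_le_log hP hPle
      _ = 6 * Real.log n := by rw [Real.log_pow]; push_cast; ring
  have hle : -δ * ((F n).card : ℝ) ≤ -Real.log (2*((n:ℝ)+1)*((n:ℝ)+2)) := by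
    have : -(δ * ((F n).card : ℝ)) ≤ -(6 * Real.log n) := neg_le_neg hcard
    calc -δ * ((F n).card : ℝ) = -(δ * ((F n).card : ℝ)) := by ring
      _ ≤ -(6 * Real.log n) := this
      _ ≤ -Real.log (2*((n:ℝ)+1)*((n:ℝ)+2)) := neg_le_neg hlogP
  calc Real.exp (-δ * ((F n).card : ℝ)) ≤ Real.exp (-Real.log (2*((n:ℝ)+1)*((n:ℝ)+2))) :=
        Real.exp_le_exp.2 hle
    _ = 1/(2*((n:ℝ)+1)*((n:ℝ)+2)) := by
        rw [Real.exp_neg, Real.exp_log hP, one_div]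

end AuxGrow
section AuxStepA

variable [Group G] [MetricSpace X] [MulAction G X]

lemma ballM_le_cost {F : ℕ → Finset G} {Z : Set X} {N : ℕ} {ε s : ℝ}
    (I : Set (X × ℕ)) (hIc : I.Countable) (hN : ∀ p ∈ I, N ≤ p.2)
    (hcov : Z ⊆ ⋃ p ∈ I, bowenBall (F p.2) p.1 ε) :
    ballM F Z N ε s ≤ ∑' p : I, ENNReal.ofReal (Real.exp (-s * ((F (p:X×ℕ).2).card : ℝ))) :=
  le_trans (iInf_le _ I) (le_trans (iInf_le _ hIc) (le_trans (iInf_le _ hN) (iInf_le _ hcov)))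

omit [Group G] [MetricSpace X] [MulAction G X] in
lemma tsum_subtype_prod_swap {I : Set (X × ℕ)} (d : X × ℕ → ℝ≥0∞)
    (hd : ∀ p, p ∉ I → d p = 0) :
    ∑' p : I, d (p : X × ℕ) = ∑' (n : ℕ), ∑' (x : X), d (x, n) := by
  rw [tsum_subtype]
  have h1 : I.indicator d = d := by
    funext p
    by_cases hp : p ∈ I
    · rw [Set.indicator_of_mem hp]
    · rw [Set.indicator_of_notMem hp, hd p hp]
  rw [h1, ENNReal.tsum_prod', ENNReal.tsum_comm]

lemma stepA {F : ℕ → Finset G} (hGrow : GrowthCond F) (K : Set X)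
    {s δ ε : ℝ} (hs : 0 ≤ s) (hδ : 0 < δ) {η : ℝ≥0∞} (hη : η ≠ 0) :
    ∃ N₀ : ℕ, ∀ N, N₀ ≤ N →
      ballM F K N (2*ε) (s+δ) ≤ wtWset F K N ε s + η := by
  classical
  obtain ⟨N₁, hN₁⟩ := growth_exp_bound hGrow hδ
  by_cases hηt : η = ⊤
  · exact ⟨0, fun N _ => by rw [hηt, add_top]; exact le_top⟩
  have hη2 : (0:ℝ≥0∞) < η/2 := ENNReal.div_pos hη ENNReal.ofNat_ne_top
  have hη2t : η/2 ≠ ⊤ := by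
    simp only [ne_eq, ENNReal.div_eq_top]
    push_neg
    exact ⟨fun _ => by norm_num, fun h => absurd h hηt⟩
  -- find N₂ with ofReal (1/(2*(N₂+1))) ≤ η/2
  obtain ⟨N₂, hN₂⟩ : ∃ N₂ : ℕ, ENNReal.ofReal (1/(2*((N₂:ℝ)+1))) ≤ η/2 := by
    rcases le_or_gt 1 (η/2) with hge | hlt
    · refine ⟨0, le_trans ?_ hge⟩
      calc ENNReal.ofReal (1/(2*(((0:ℕ):ℝ)+1))) ≤ ENNReal.ofReal 1 :=
            ENNReal.ofReal_le_ofReal (by norm_num)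
        _ = 1 := ENNReal.ofReal_one
    · have hr : 0 < (η/2).toReal := ENNReal.toReal_pos hη2.ne' hη2t
      obtain ⟨N₂, hN₂⟩ := exists_nat_one_div_lt hr
      refine ⟨N₂, ?_⟩
      calc ENNReal.ofReal (1/(2*((N₂:ℝ)+1))) ≤ ENNReal.ofReal (1/((N₂:ℝ)+1)) := by
            apply ENNReal.ofReal_le_ofReal
            rw [div_le_div_iff₀ (by positivity) (by positivity)]
            nlinarith [Nat.cast_nonneg (α := ℝ) N₂]
        _ ≤ ENNReal.ofReal ((η/2).toReal) := ENNReal.ofReal_le_ofReal hN₂.le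
        _ = η/2 := ENNReal.ofReal_toReal hη2t
  refine ⟨max N₁ N₂, fun N hN => ?_⟩
  have hNN₁ : N₁ ≤ N := le_trans (le_max_left _ _) hN
  have hNN₂ : N₂ ≤ N := le_trans (le_max_right _ _) hN
  by_cases hWtop : wtWset F K N ε s = ⊤
  · rw [hWtop, top_add]; exact le_top
  have hWlt : wtW F (K.indicator fun _ => (1:ℝ≥0∞)) N ε s < wtWset F K N ε s + η/2 :=
    ENNReal.lt_add_right hWtop hη2.ne'
  obtain ⟨I, c, hIc, hcond, hcov, hcost⟩ := exists_cover_of_wtW_lt hWlt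
  have hRHSfin : wtWset F K N ε s + η/2 ≠ ⊤ :=
    (ENNReal.add_lt_top.2 ⟨Ne.lt_top hWtop, Ne.lt_top hη2t⟩).ne
  have hcost_fin : (∑' p : I, c (p:X×ℕ) *
      ENNReal.ofReal (Real.exp (-s * ((F (p:X×ℕ).2).card : ℝ)))) ≠ ⊤ :=
    ne_top_of_le_ne_top hRHSfin hcost.le
  -- levels
  set u : ℕ → X → ℝ≥0∞ := fun n x => if (x, n) ∈ I then c (x, n) else 0 with hu
  set Wn : ℕ → ℝ≥0∞ := fun n => ∑' x : X, u n x with hWn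
  set w : ℕ → X → ℝ≥0∞ := fun n z => ∑' x : X,
    u n x * (bowenBall (F n) x ε).indicator (fun _ => (1:ℝ≥0∞)) z with hw
  set γ : ℕ → ℝ≥0∞ := fun n => ENNReal.ofReal ((1:ℝ)/(2*((n:ℝ)+1)*((n:ℝ)+2))) with hγ
  have hγ0 : ∀ n, γ n ≠ 0 := fun n =>
    (ENNReal.ofReal_pos.2 (by positivity : (0:ℝ) < (1:ℝ)/(2*((n:ℝ)+1)*((n:ℝ)+2)))).ne'
  have hγt : ∀ n, γ n ≠ ⊤ := fun n => ENNReal.ofReal_ne_top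
  -- split covering sums by levels
  have hsplit_cov : ∀ z, (∑' p : I, c (p:X×ℕ) *
      (bowenBall (F (p:X×ℕ).2) (p:X×ℕ).1 ε).indicator (fun _ => (1:ℝ≥0∞)) z)
      = ∑' n, w n z := by
    intro z
    calc (∑' p : I, c (p:X×ℕ) *
        (bowenBall (F (p:X×ℕ).2) (p:X×ℕ).1 ε).indicator (fun _ => (1:ℝ≥0∞)) z)
        = ∑' p : I, (if (p:X×ℕ) ∈ I then c (p:X×ℕ) else 0) *
            (bowenBall (F (p:X×ℕ).2) (p:X×ℕ).1 ε).indicator (fun _ => (1:ℝ≥0∞)) z :=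
          tsum_congr fun p => by rw [if_pos p.2]
      _ = ∑' (n : ℕ), ∑' (x : X), (if (x,n) ∈ I then c (x,n) else 0) *
            (bowenBall (F n) x ε).indicator (fun _ => (1:ℝ≥0∞)) z :=
          tsum_subtype_prod_swap (d := fun q : X × ℕ => (if q ∈ I then c q else 0) *
            (bowenBall (F q.2) q.1 ε).indicator (fun _ => (1:ℝ≥0∞)) z)
            (fun p hp => by rw [if_neg hp, zero_mul])
      _ = ∑' n, w n z := rfl
  have hsplit_cost : (∑' p : I, c (p:X×ℕ) *
      ENNReal.ofReal (Real.exp (-s * ((F (p:X×ℕ).2).card : ℝ))))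
      = ∑' n, Wn n * ENNReal.ofReal (Real.exp (-s * ((F n).card : ℝ))) := by
    calc (∑' p : I, c (p:X×ℕ) * ENNReal.ofReal (Real.exp (-s * ((F (p:X×ℕ).2).card : ℝ))))
        = ∑' p : I, (if (p:X×ℕ) ∈ I then c (p:X×ℕ) else 0) *
            ENNReal.ofReal (Real.exp (-s * ((F (p:X×ℕ).2).card : ℝ))) :=
          tsum_congr fun p => by rw [if_pos p.2]
      _ = ∑' (n : ℕ), ∑' (x : X), (if (x,n) ∈ I then c (x,n) else 0) *
            ENNReal.ofReal (Real.exp (-s * ((F n).card : ℝ))) :=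
          tsum_subtype_prod_swap (d := fun q : X × ℕ => (if q ∈ I then c q else 0) *
            ENNReal.ofReal (Real.exp (-s * ((F q.2).card : ℝ))))
            (fun p hp => by rw [if_neg hp, zero_mul])
      _ = ∑' n, Wn n * ENNReal.ofReal (Real.exp (-s * ((F n).card : ℝ))) := by
          refine tsum_congr fun n => ?_
          rw [hWn, ENNReal.tsum_mul_right]
  have hWfin : ∀ n, Wn n ≠ ⊤ := by
    intro n htop
    have he0 : ENNReal.ofReal (Real.exp (-s * ((F n).card : ℝ))) ≠ 0 :=
      (ENNReal.ofReal_pos.2 (Real.exp_pos _)).ne'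
    have h1 : Wn n * ENNReal.ofReal (Real.exp (-s * ((F n).card : ℝ)))
        ≤ ∑' n', Wn n' * ENNReal.ofReal (Real.exp (-s * ((F n').card : ℝ))) :=
      ENNReal.le_tsum n
    rw [htop, ENNReal.top_mul he0, ← hsplit_cost] at h1
    exact hcost_fin (top_le_iff.1 h1)
  -- K covered by level sets
  have hZsub : K ⊆ ⋃ n, {z | z ∈ K ∧ γ n ≤ w n z} := by
    intro z hz
    by_contra hcon
    simp only [Set.mem_iUnion, Set.mem_setOf_eq, not_exists, not_and] at hcon
    have h1 : (1:ℝ≥0∞) ≤ ∑' n, w n z := by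
      have h2 := hcov z
      rw [Set.indicator_of_mem hz, hsplit_cov z] at h2
      exact h2
    have h3 : (∑' n, w n z) ≤ ∑' n, γ n :=
      ENNReal.tsum_le_tsum fun n => (not_le.1 (fun hle => hcon n hz hle)).le
    have h4 : (∑' n, γ n) ≤ ENNReal.ofReal (1/2) := tsum_gamma_le
    have h5 : (1:ℝ≥0∞) ≤ ENNReal.ofReal (1/2) := le_trans h1 (le_trans h3 h4)
    have h6 : ENNReal.ofReal ((1:ℝ)/2) < 1 := ENNReal.ofReal_lt_one.2 (by norm_num)
    exact absurd h5 (not_le.2 h6)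
  have hZN : ∀ n, n < N → ∀ z, ¬ (z ∈ K ∧ γ n ≤ w n z) := by
    intro n hn z hzz
    have hwz : w n z = 0 := by
      rw [hw]
      simp only
      convert tsum_zero with x
      rw [hu]
      simp only
      rw [if_neg, zero_mul]
      intro hmem
      exact absurd ((hcond _ hmem).1) (by omega)
    rw [hwz] at hzz
    exact (hγ0 n) (le_zero_iff.mp hzz.2)
  -- greedy at each level
  have hYex : ∀ n, ∃ Y : Finset X, Y.card ≤ ⌈(Wn n / γ n).toReal⌉₊ ∧
      {z | z ∈ K ∧ γ n ≤ w n z} ⊆ ⋃ y ∈ Y, bowenBall (F n) y (2*ε) := by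
    intro n
    refine greedy_cover (γ n) (hγ0 n) (hγt n) _ (u n) _ ?_ ?_
    · have hdivt : Wn n / γ n ≠ ⊤ := (ENNReal.div_lt_top (hWfin n) (hγ0 n)).ne
      have h1 : Wn n / γ n ≤ ((⌈(Wn n / γ n).toReal⌉₊ : ℕ) : ℝ≥0∞) := by
        calc Wn n / γ n = ENNReal.ofReal ((Wn n / γ n).toReal) :=
              (ENNReal.ofReal_toReal hdivt).symm
          _ ≤ ENNReal.ofReal ((⌈(Wn n / γ n).toReal⌉₊ : ℝ)) :=
              ENNReal.ofReal_le_ofReal (Nat.le_ceil _)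
          _ = _ := ENNReal.ofReal_natCast _
      calc Wn n = Wn n / γ n * γ n := (ENNReal.div_mul_cancel (hγ0 n) (hγt n)).symm
        _ ≤ _ := mul_le_mul_left h1 _
    · intro z hz
      exact hz.2
  choose Y hYcard hYcov using hYex
  set J : Set (X × ℕ) := {p | N ≤ p.2 ∧ p.1 ∈ Y p.2} with hJ
  have hJc : J.Countable := by
    refine Set.Countable.mono ?_
      (Set.countable_iUnion fun n => (((Y n).finite_toSet).prod (Set.finite_singleton n)).countable)
    intro p hp
    exact Set.mem_iUnion.2 ⟨p.2, ⟨hp.2, rfl⟩⟩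
  have hJcover : K ⊆ ⋃ p ∈ J, bowenBall (F p.2) p.1 (2*ε) := by
    intro z hz
    obtain ⟨n, hn⟩ := Set.mem_iUnion.1 (hZsub hz)
    have hnN : N ≤ n := by
      by_contra hcon
      push_neg at hcon
      exact hZN n hcon z hn
    obtain ⟨y, hy, hzy⟩ := Set.mem_iUnion₂.1 (hYcov n hn)
    exact Set.mem_iUnion₂.2 ⟨(y, n), ⟨hnN, hy⟩, hzy⟩
  refine le_trans (ballM_le_cost J hJc (fun p hp => hp.1) hJcover) ?_
  -- estimate the cost of the new cover
  have hsplitJ : (∑' p : J, ENNReal.ofReal (Real.exp (-(s+δ) * ((F (p:X×ℕ).2).card : ℝ))))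
      = ∑' (n : ℕ), ∑' (x : X), (if (x,n) ∈ J then
          ENNReal.ofReal (Real.exp (-(s+δ) * ((F n).card : ℝ))) else 0) := by
    calc (∑' p : J, ENNReal.ofReal (Real.exp (-(s+δ) * ((F (p:X×ℕ).2).card : ℝ))))
        = ∑' p : J, (if (p:X×ℕ) ∈ J then
            ENNReal.ofReal (Real.exp (-(s+δ) * ((F (p:X×ℕ).2).card : ℝ))) else 0) :=
          tsum_congr fun p => (if_pos p.2).symm
      _ = _ := tsum_subtype_prod_swap (d := fun q : X × ℕ => if q ∈ J then
            ENNReal.ofReal (Real.exp (-(s+δ) * ((F q.2).card : ℝ))) else 0)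
            (fun p hp => by rw [if_neg hp])
  rw [hsplitJ]
  have hlevel : ∀ n : ℕ, (∑' x : X, (if (x,n) ∈ J then
      ENNReal.ofReal (Real.exp (-(s+δ) * ((F n).card : ℝ))) else 0))
      ≤ Wn n * ENNReal.ofReal (Real.exp (-s * ((F n).card : ℝ)))
        + (if N ≤ n then ENNReal.ofReal (Real.exp (-δ * ((F n).card : ℝ))) else 0) := by
    intro n
    by_cases hnN : N ≤ n
    · have hS : (∑' x : X, (if (x,n) ∈ J then
          ENNReal.ofReal (Real.exp (-(s+δ) * ((F n).card : ℝ))) else 0))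
          = (Y n).card * ENNReal.ofReal (Real.exp (-(s+δ) * ((F n).card : ℝ))) := by
        have h1 : (∑' x : X, (if (x,n) ∈ J then
            ENNReal.ofReal (Real.exp (-(s+δ) * ((F n).card : ℝ))) else 0))
            = ∑ x ∈ Y n, ENNReal.ofReal (Real.exp (-(s+δ) * ((F n).card : ℝ))) := by
          rw [tsum_eq_sum (s := Y n) (fun x hx => by
            rw [if_neg]
            intro hmem
            exact hx hmem.2)]
          refine Finset.sum_congr rfl fun x hx => ?_
          rw [if_pos ⟨hnN, hx⟩]
        rw [h1, Finset.sum_const, nsmul_eq_mul]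
      rw [hS]
      have hsplit_exp : ENNReal.ofReal (Real.exp (-(s+δ) * ((F n).card : ℝ)))
          = ENNReal.ofReal (Real.exp (-s * ((F n).card : ℝ)))
            * ENNReal.ofReal (Real.exp (-δ * ((F n).card : ℝ))) := by
        rw [← ENNReal.ofReal_mul (Real.exp_nonneg _)]
        · congr 1
          rw [← Real.exp_add]
          congr 1
          ring
      have hdγ : ENNReal.ofReal (Real.exp (-δ * ((F n).card : ℝ))) ≤ γ n :=
        ENNReal.ofReal_le_ofReal (hN₁ n (le_trans hNN₁ hnN))
      have hcard' : ((Y n).card : ℝ≥0∞) ≤ (⌈(Wn n / γ n).toReal⌉₊ : ℝ≥0∞) := by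
        exact_mod_cast Nat.cast_le.2 (hYcard n)
      have hceil : ((⌈(Wn n / γ n).toReal⌉₊ : ℕ) : ℝ≥0∞) ≤ Wn n / γ n + 1 := by
        have hdivt : Wn n / γ n ≠ ⊤ := (ENNReal.div_lt_top (hWfin n) (hγ0 n)).ne
        have h2 : ((⌈(Wn n / γ n).toReal⌉₊ : ℕ) : ℝ) ≤ (Wn n / γ n).toReal + 1 :=
          (Nat.ceil_lt_add_one ENNReal.toReal_nonneg).le
        calc ((⌈(Wn n / γ n).toReal⌉₊ : ℕ) : ℝ≥0∞)
            = ENNReal.ofReal ((⌈(Wn n / γ n).toReal⌉₊ : ℕ) : ℝ) := (ENNReal.ofReal_natCast _).symm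
          _ ≤ ENNReal.ofReal ((Wn n / γ n).toReal + 1) := ENNReal.ofReal_le_ofReal h2
          _ = ENNReal.ofReal ((Wn n / γ n).toReal) + ENNReal.ofReal 1 :=
              ENNReal.ofReal_add ENNReal.toReal_nonneg (by norm_num)
          _ = Wn n / γ n + 1 := by rw [ENNReal.ofReal_toReal hdivt, ENNReal.ofReal_one]
      calc ((Y n).card : ℝ≥0∞) * ENNReal.ofReal (Real.exp (-(s+δ) * ((F n).card : ℝ)))
          ≤ (Wn n / γ n + 1) * ENNReal.ofReal (Real.exp (-(s+δ) * ((F n).card : ℝ))) :=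
            mul_le_mul_left (le_trans hcard' hceil) _
        _ = (Wn n / γ n) * ENNReal.ofReal (Real.exp (-(s+δ) * ((F n).card : ℝ)))
            + ENNReal.ofReal (Real.exp (-(s+δ) * ((F n).card : ℝ))) := by
            rw [add_mul, one_mul]
        _ ≤ Wn n * ENNReal.ofReal (Real.exp (-s * ((F n).card : ℝ)))
            + (if N ≤ n then ENNReal.ofReal (Real.exp (-δ * ((F n).card : ℝ))) else 0) := by
            refine add_le_add ?_ ?_
            · rw [hsplit_exp]
              rw [div_eq_mul_inv]
              calc Wn n * (γ n)⁻¹ * (ENNReal.ofReal (Real.exp (-s * ((F n).card : ℝ)))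
                  * ENNReal.ofReal (Real.exp (-δ * ((F n).card : ℝ))))
                  = Wn n * ENNReal.ofReal (Real.exp (-s * ((F n).card : ℝ)))
                    * (ENNReal.ofReal (Real.exp (-δ * ((F n).card : ℝ))) * (γ n)⁻¹) := by
                    ring
                _ ≤ Wn n * ENNReal.ofReal (Real.exp (-s * ((F n).card : ℝ))) * (γ n * (γ n)⁻¹) :=
                    mul_le_mul_right (mul_le_mul_left hdγ _) _
                _ = Wn n * ENNReal.ofReal (Real.exp (-s * ((F n).card : ℝ))) := by
                    rw [ENNReal.mul_inv_cancel (hγ0 n) (hγt n), mul_one]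
            · rw [if_pos hnN]
              apply ENNReal.ofReal_le_ofReal
              apply Real.exp_le_exp.2
              nlinarith [Nat.cast_nonneg (α := ℝ) (F n).card]
    · have hS0 : (∑' x : X, (if (x,n) ∈ J then
          ENNReal.ofReal (Real.exp (-(s+δ) * ((F n).card : ℝ))) else 0)) = 0 := by
        convert tsum_zero with x
        rw [if_neg]
        intro hmem
        exact hnN hmem.1
      rw [hS0]
      exact zero_le
  calc (∑' (n : ℕ), ∑' (x : X), (if (x,n) ∈ J then
      ENNReal.ofReal (Real.exp (-(s+δ) * ((F n).card : ℝ))) else 0))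
      ≤ ∑' n, (Wn n * ENNReal.ofReal (Real.exp (-s * ((F n).card : ℝ)))
        + (if N ≤ n then ENNReal.ofReal (Real.exp (-δ * ((F n).card : ℝ))) else 0)) :=
        ENNReal.tsum_le_tsum hlevel
    _ = (∑' n, Wn n * ENNReal.ofReal (Real.exp (-s * ((F n).card : ℝ))))
        + ∑' n, (if N ≤ n then ENNReal.ofReal (Real.exp (-δ * ((F n).card : ℝ))) else 0) :=
        ENNReal.tsum_add
    _ ≤ (wtWset F K N ε s + η/2) + η/2 := by
        refine add_le_add ?_ ?_
        · rw [← hsplit_cost]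
          exact hcost.le
        · calc (∑' n, (if N ≤ n then ENNReal.ofReal (Real.exp (-δ * ((F n).card : ℝ))) else 0))
              ≤ ∑' n, (if N ≤ n then γ n else 0) := by
                refine ENNReal.tsum_le_tsum fun n => ?_
                by_cases hn : N ≤ n
                · rw [if_pos hn, if_pos hn]
                  exact ENNReal.ofReal_le_ofReal (hN₁ n (le_trans hNN₁ hn))
                · rw [if_neg hn, if_neg hn]
            _ ≤ ENNReal.ofReal (1/(2*((N:ℝ)+1))) := tsum_tail_le N
            _ ≤ ENNReal.ofReal (1/(2*((N₂:ℝ)+1))) := by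
                apply ENNReal.ofReal_le_ofReal
                have h1 : ((N₂:ℝ)+1) ≤ ((N:ℝ)+1) := by
                  have : (N₂:ℝ) ≤ N := by exact_mod_cast hNN₂
                  linarith
                rw [div_le_div_iff₀ (by positivity) (by positivity)]
                nlinarith
            _ ≤ η/2 := hN₂
    _ = wtWset F K N ε s + η := by rw [add_assoc, ENNReal.add_halves]

end AuxStepA
section AuxStepB

variable [Group G] [MetricSpace X] [CompactSpace X] [MulAction G X]
  [ContinuousConstSMul G X] [MeasurableSpace X] [BorelSpace X]

lemma stepB {F : ℕ → Finset G} {K : Set X} (hKc : IsCompact K) (hKne : K.Nonempty)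
    {N : ℕ} {ε s : ℝ} (hε : 0 < ε) {c : ℝ} (hc : 0 < c)
    (hW : ENNReal.ofReal c ≤ wtWset F K N ε s) :
    ∃ μ : Measure X, IsProbabilityMeasure μ ∧ μ K = 1 ∧
      ∀ (x : X) (n : ℕ), N ≤ n →
        μ (bowenBall (F n) x ε) ≤ ENNReal.ofReal (c⁻¹ * Real.exp (-s * ((F n).card : ℝ))) := by
  classical
  haveI : Nonempty X := ⟨hKne.choose⟩
  -- the sublinear functional
  set q : C(X, ℝ) → ℝ≥0∞ := fun f =>
    wtW F (fun x => K.indicator (fun _ => ENNReal.ofReal (f x)) x) N ε s with hq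
  have hq_fin : ∀ f, q f ≠ ⊤ := by
    intro f
    refine wtW_ne_top hε (M := ENNReal.ofReal ‖f‖) ENNReal.ofReal_ne_top fun x => ?_
    by_cases hx : x ∈ K
    · rw [Set.indicator_of_mem hx]
      exact ENNReal.ofReal_le_ofReal ((le_abs_self _).trans (f.norm_coe_le_norm x))
    · rw [Set.indicator_of_notMem hx]
      exact zero_le
  have hq_zero : ∀ f : C(X, ℝ), (∀ x ∈ K, f x ≤ 0) → q f = 0 := by
    intro f hf
    refine wtW_zero fun x => ?_
    by_cases hx : x ∈ K
    · rw [Set.indicator_of_mem hx, ENNReal.ofReal_eq_zero]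
      exact hf x hx
    · exact Set.indicator_of_notMem hx _
  have hq_add : ∀ f g : C(X, ℝ), q (f + g) ≤ q f + q g := by
    intro f g
    refine wtW_add_le fun x => ?_
    by_cases hx : x ∈ K
    · simp only [Set.indicator_of_mem hx, ContinuousMap.add_apply]
      exact ENNReal.ofReal_add_le
    · simp only [Set.indicator_of_notMem hx]
      exact zero_le
  have hq_smul : ∀ (a : ℝ), 0 < a → ∀ f : C(X, ℝ), q (a • f) = ENNReal.ofReal a * q f := by
    intro a ha f
    have h1 : (fun x => K.indicator (fun _ => ENNReal.ofReal ((a • f) x)) x)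
        = fun x => ENNReal.ofReal a * K.indicator (fun _ => ENNReal.ofReal (f x)) x := by
      funext x
      by_cases hx : x ∈ K
      · rw [Set.indicator_of_mem hx, Set.indicator_of_mem hx, ContinuousMap.smul_apply,
          smul_eq_mul, ENNReal.ofReal_mul ha.le]
      · rw [Set.indicator_of_notMem hx, Set.indicator_of_notMem hx, mul_zero]
    simp only [hq]
    rw [h1]
    exact wtW_smul (ENNReal.ofReal_pos.2 ha).ne' ENNReal.ofReal_ne_top
  have hq_mono : ∀ f g : C(X, ℝ), (∀ x ∈ K, f x ≤ g x) → q f ≤ q g := by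
    intro f g hfg
    refine wtW_mono fun x => ?_
    by_cases hx : x ∈ K
    · rw [Set.indicator_of_mem hx, Set.indicator_of_mem hx]
      exact ENNReal.ofReal_le_ofReal (hfg x hx)
    · rw [Set.indicator_of_notMem hx]
      exact zero_le
  have hq_one : ENNReal.ofReal c ≤ q 1 := by
    refine le_trans hW (le_of_eq ?_)
    rw [wtWset, hq]
    congr 1
    funext x
    by_cases hx : x ∈ K
    · rw [Set.indicator_of_mem hx, Set.indicator_of_mem hx, ContinuousMap.one_apply,
        ENNReal.ofReal_one]
    · rw [Set.indicator_of_notMem hx, Set.indicator_of_notMem hx]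
  set p : C(X, ℝ) → ℝ := fun f => c⁻¹ * (q f).toReal with hp
  have hp_nonneg : ∀ f, 0 ≤ p f := fun f => by
    apply mul_nonneg (by positivity) ENNReal.toReal_nonneg
  have hp_zero : ∀ f : C(X, ℝ), (∀ x ∈ K, f x ≤ 0) → p f = 0 := by
    intro f hf
    simp only [hp]
    rw [hq_zero f hf, ENNReal.toReal_zero, mul_zero]
  have hp_hom : ∀ a : ℝ, 0 < a → ∀ f : C(X, ℝ), p (a • f) = a * p f := by
    intro a ha f
    simp only [hp]
    rw [hq_smul a ha f, ENNReal.toReal_mul, ENNReal.toReal_ofReal ha.le]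
    ring
  have hp_add : ∀ f g : C(X, ℝ), p (f + g) ≤ p f + p g := by
    intro f g
    simp only [hp]
    have h1 : (q (f + g)).toReal ≤ (q f).toReal + (q g).toReal := by
      calc (q (f + g)).toReal ≤ (q f + q g).toReal :=
            ENNReal.toReal_mono (by
              exact (ENNReal.add_lt_top.2 ⟨(hq_fin f).lt_top, (hq_fin g).lt_top⟩).ne)
              (hq_add f g)
        _ = (q f).toReal + (q g).toReal := ENNReal.toReal_add (hq_fin f) (hq_fin g)
    nlinarith [inv_pos.2 hc]
  have hp_one : 1 ≤ p 1 := by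
    have h1 : c ≤ (q 1).toReal := by
      rw [← ENNReal.ofReal_le_iff_le_toReal (hq_fin 1)] at *
      exact hq_one
    simp only [hp]
    calc (1:ℝ) = c⁻¹ * c := (inv_mul_cancel₀ hc.ne').symm
      _ ≤ c⁻¹ * (q 1).toReal := by
          apply mul_le_mul_of_nonneg_left h1 (by positivity)
  -- Hahn-Banach extension
  have hone_ne : ∀ a : ℝ, a • (1 : C(X, ℝ)) = 0 → (RingHom.id ℝ) a • (1:ℝ) = 0 := by
    intro a ha
    have := ContinuousMap.congr_fun ha hKne.choose
    simpa using this
  have hdom_le : ∀ xx : (LinearPMap.mkSpanSingleton' (1 : C(X, ℝ)) (1 : ℝ) hone_ne).domain,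
      (LinearPMap.mkSpanSingleton' (1 : C(X, ℝ)) (1 : ℝ) hone_ne) xx ≤ p xx := by
    rintro ⟨v, hv⟩
    have hv' : v ∈ Submodule.span ℝ {(1 : C(X, ℝ))} := by
      rwa [LinearPMap.domain_mkSpanSingleton] at hv
    obtain ⟨a, ha⟩ := Submodule.mem_span_singleton.1 hv'
    subst ha
    rw [LinearPMap.mkSpanSingleton'_apply]
    show a • (1:ℝ) ≤ p (a • 1)
    rcases lt_trichotomy a 0 with h | h | h
    · calc a • (1:ℝ) = a := by rw [smul_eq_mul, mul_one]
        _ ≤ 0 := h.le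
        _ ≤ p (a • 1) := hp_nonneg _
    · subst h
      simp only [zero_smul]
      rw [show p 0 = 0 from hp_zero 0 (fun x _ => le_rfl)]
    · calc a • (1:ℝ) = a * 1 := by rw [smul_eq_mul]
        _ ≤ a * p 1 := by nlinarith [hp_one]
        _ = p (a • 1) := (hp_hom a h 1).symm
  obtain ⟨L, hLdom, hLp⟩ := exists_extension_of_le_sublinear (LinearPMap.mkSpanSingleton' (1 : C(X, ℝ)) (1 : ℝ) hone_ne) p (fun a ha f => hp_hom a ha f) hp_add hdom_le
  have hL_one : L 1 = 1 := by
    have h1 : (1 : C(X, ℝ)) ∈ (LinearPMap.mkSpanSingleton' (1 : C(X, ℝ)) (1 : ℝ) hone_ne).domain := by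
      rw [LinearPMap.domain_mkSpanSingleton]
      exact Submodule.mem_span_singleton_self _
    have h2 := hLdom ⟨1, h1⟩
    have h3 : (LinearPMap.mkSpanSingleton' (1 : C(X, ℝ)) (1 : ℝ) hone_ne) ⟨(1 : C(X, ℝ)), h1⟩ = 1 := by
      rw [LinearPMap.mkSpanSingleton'_apply_self]
    rw [h3] at h2
    exact h2
  have hL_pos : ∀ f : C(X, ℝ), (∀ x, 0 ≤ f x) → 0 ≤ L f := by
    intro f hf
    have h1 : L (-f) ≤ p (-f) := hLp _
    have h2 : p (-f) = 0 := hp_zero _ (fun x _ => by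
      simp only [ContinuousMap.neg_apply, neg_nonpos]
      exact hf x)
    have h3 : L (-f) = -L f := map_neg L f
    rw [h3, h2] at h1
    linarith
  have hL_mono : ∀ f g : C(X, ℝ), (∀ x, f x ≤ g x) → L f ≤ L g := by
    intro f g hfg
    have h1 : 0 ≤ L (g - f) := hL_pos _ (fun x => by
      simp only [ContinuousMap.sub_apply]
      linarith [hfg x])
    have h2 : L (g - f) = L g - L f := map_sub L g f
    linarith [h2 ▸ h1]
  -- the Riesz-type content construction
  set S : Set X → Set ℝ := fun T =>
    {y | ∃ f : C(X, ℝ), (∀ x, 0 ≤ f x) ∧ (∀ x ∈ T, 1 ≤ f x) ∧ L f = y} with hS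
  have hS_ne : ∀ T : Set X, (S T).Nonempty := fun T =>
    ⟨L 1, 1, fun x => zero_le_one, fun x _ => by simp, rfl⟩
  have hS_bdd : ∀ T : Set X, BddBelow (S T) := fun T =>
    ⟨0, by rintro y ⟨f, hf0, _, rfl⟩; exact hL_pos f hf0⟩
  have hS_inf_nonneg : ∀ T : Set X, 0 ≤ sInf (S T) := fun T =>
    le_csInf (hS_ne T) (by rintro y ⟨f, hf0, _, rfl⟩; exact hL_pos f hf0)
  have hS_inf_le_one : ∀ T : Set X, sInf (S T) ≤ 1 := fun T => by
    have h0 := csInf_le (hS_bdd T)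
      (show L 1 ∈ S T from ⟨1, fun x => zero_le_one, fun x _ => by simp, rfl⟩)
    rwa [hL_one] at h0
  have hS_subset : ∀ T₁ T₂ : Set X, T₁ ⊆ T₂ → S T₂ ⊆ S T₁ := by
    rintro T₁ T₂ h y ⟨f, hf0, hf1, rfl⟩
    exact ⟨f, hf0, fun x hx => hf1 x (h hx), rfl⟩
  have hS_add : ∀ T₁ T₂ : Set X, sInf (S (T₁ ∪ T₂)) ≤ sInf (S T₁) + sInf (S T₂) := by
    intro T₁ T₂
    have key : ∀ y₁ ∈ S T₁, ∀ y₂ ∈ S T₂, sInf (S (T₁ ∪ T₂)) ≤ y₁ + y₂ := by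
      rintro y₁ ⟨f₁, hf₁0, hf₁1, rfl⟩ y₂ ⟨f₂, hf₂0, hf₂1, rfl⟩
      have hmem : L (f₁ + f₂) ∈ S (T₁ ∪ T₂) := by
        refine ⟨f₁ + f₂, fun x => by
          simp only [ContinuousMap.add_apply]
          exact add_nonneg (hf₁0 x) (hf₂0 x), fun x hx => ?_, rfl⟩
        simp only [ContinuousMap.add_apply]
        rcases hx with hx | hx
        · linarith [hf₁1 x hx, hf₂0 x]
        · linarith [hf₂1 x hx, hf₁0 x]
      calc sInf (S (T₁ ∪ T₂)) ≤ L (f₁ + f₂) := csInf_le (hS_bdd _) hmem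
        _ = L f₁ + L f₂ := map_add L f₁ f₂
    have h3 : ∀ y₁ ∈ S T₁, sInf (S (T₁ ∪ T₂)) - sInf (S T₂) ≤ y₁ := by
      intro y₁ h₁
      have h4 : sInf (S (T₁ ∪ T₂)) - y₁ ≤ sInf (S T₂) :=
        le_csInf (hS_ne _) fun y₂ h₂ => by linarith [key y₁ h₁ y₂ h₂]
      linarith
    have h5 : sInf (S (T₁ ∪ T₂)) - sInf (S T₂) ≤ sInf (S T₁) := le_csInf (hS_ne _) h3
    linarith
  have hS_sup : ∀ K₁ K₂ : Set X, IsCompact K₁ → IsCompact K₂ → Disjoint K₁ K₂ →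
      sInf (S K₁) + sInf (S K₂) ≤ sInf (S (K₁ ∪ K₂)) := by
    intro K₁ K₂ hc₁ hc₂ hd
    obtain ⟨U₁, U₂, hU₁, hU₂, hKU₁, hKU₂, hUd⟩ :=
      SeparatedNhds.of_isCompact_isCompact_isClosed hc₁ hc₂ hc₂.isClosed hd
    obtain ⟨h₁, hh₁0, hh₁1, hh₁icc⟩ := exists_continuous_zero_one_of_isCompact
      hU₁.isClosed_compl.isCompact hc₁.isClosed
      (Set.disjoint_left.2 fun a ha ha' => ha (hKU₁ ha'))
    obtain ⟨h₂, hh₂0, hh₂1, hh₂icc⟩ := exists_continuous_zero_one_of_isCompact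
      hU₂.isClosed_compl.isCompact hc₂.isClosed
      (Set.disjoint_left.2 fun a ha ha' => ha (hKU₂ ha'))
    have hsum_le : ∀ x, h₁ x + h₂ x ≤ 1 := by
      intro x
      by_cases hx : x ∈ U₁
      · have hx2 : x ∉ U₂ := fun hx2 => Set.disjoint_left.1 hUd hx hx2
        have e2 : h₂ x = 0 := by simpa using hh₂0 hx2
        have := (hh₁icc x).2
        linarith
      · have e1 : h₁ x = 0 := by simpa using hh₁0 hx
        have := (hh₂icc x).2
        linarith
    refine le_csInf (hS_ne _) ?_
    rintro y ⟨f, hf0, hf1, rfl⟩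
    have hadm₁ : L (f * h₁) ∈ S K₁ := by
      refine ⟨f * h₁, fun x => by
        simp only [ContinuousMap.mul_apply]
        exact mul_nonneg (hf0 x) (hh₁icc x).1, fun x hx => ?_, rfl⟩
      have e1 : h₁ x = 1 := by simpa using hh₁1 hx
      simp only [ContinuousMap.mul_apply, e1, mul_one]
      exact hf1 x (Or.inl hx)
    have hadm₂ : L (f * h₂) ∈ S K₂ := by
      refine ⟨f * h₂, fun x => by
        simp only [ContinuousMap.mul_apply]
        exact mul_nonneg (hf0 x) (hh₂icc x).1, fun x hx => ?_, rfl⟩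
      have e1 : h₂ x = 1 := by simpa using hh₂1 hx
      simp only [ContinuousMap.mul_apply, e1, mul_one]
      exact hf1 x (Or.inr hx)
    have hL_split : L (f * h₁) + L (f * h₂) ≤ L f := by
      have e1 : L (f * h₁) + L (f * h₂) = L (f * h₁ + f * h₂) := (map_add L _ _).symm
      rw [e1]
      refine hL_mono _ _ fun x => ?_
      simp only [ContinuousMap.add_apply, ContinuousMap.mul_apply]
      nlinarith [hf0 x, hsum_le x, (hh₁icc x).1, (hh₂icc x).1]
    calc sInf (S K₁) + sInf (S K₂) ≤ L (f * h₁) + L (f * h₂) :=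
          add_le_add (csInf_le (hS_bdd _) hadm₁) (csInf_le (hS_bdd _) hadm₂)
      _ ≤ L f := hL_split
  set Λ : MeasureTheory.Content X :=
    { toFun := fun K' => Real.toNNReal (sInf (S (K' : Set X)))
      mono' := fun K₁ K₂ h =>
        Real.toNNReal_mono (csInf_le_csInf (hS_bdd _) (hS_ne _) (hS_subset _ _ h))
      sup_disjoint' := fun K₁ K₂ hd h₁ h₂ => by
        simp only [TopologicalSpace.Compacts.coe_sup]
        have hle := hS_add (K₁ : Set X) (K₂ : Set X)
        have hge := hS_sup (K₁ : Set X) (K₂ : Set X) K₁.isCompact K₂.isCompact hd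
        rw [le_antisymm hle hge, Real.toNNReal_add (hS_inf_nonneg _) (hS_inf_nonneg _)]
      sup_le' := fun K₁ K₂ => by
        simp only [TopologicalSpace.Compacts.coe_sup]
        rw [← Real.toNNReal_add (hS_inf_nonneg _) (hS_inf_nonneg _)]
        exact Real.toNNReal_mono (hS_add _ _) } with hΛ
  set μ : Measure X := Λ.measure with hμdef
  have hopen : ∀ (U : Set X) (hU : IsOpen U), μ U = Λ.innerContent ⟨U, hU⟩ := by
    intro U hU
    rw [hμdef, Λ.measure_apply hU.measurableSet]
    exact Λ.outerMeasure_opens ⟨U, hU⟩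
  have hμuniv : μ Set.univ = 1 := by
    rw [hopen Set.univ isOpen_univ]
    refine le_antisymm ?_ ?_
    · refine iSup₂_le fun K' hK' => ?_
      have h1 : Λ.toFun K' ≤ 1 := by
        simp only [hΛ]
        calc Real.toNNReal (sInf (S (K' : Set X))) ≤ Real.toNNReal 1 :=
              Real.toNNReal_mono (hS_inf_le_one _)
          _ = 1 := Real.toNNReal_one
      show ((Λ.toFun K' : NNReal) : ℝ≥0∞) ≤ 1
      exact_mod_cast h1
    · refine le_iSup₂_of_le ⟨Set.univ, isCompact_univ⟩ subset_rfl ?_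
      have h1 : (1:NNReal) ≤ Λ.toFun ⟨Set.univ, isCompact_univ⟩ := by
        simp only [hΛ]
        calc (1:NNReal) = Real.toNNReal 1 := Real.toNNReal_one.symm
          _ ≤ _ := Real.toNNReal_mono (by
              refine le_csInf (hS_ne _) ?_
              rintro y ⟨f, hf0, hf1, rfl⟩
              have h2 : L 1 ≤ L f := hL_mono _ _ fun x => by
                simpa using hf1 x (Set.mem_univ x)
              rw [hL_one] at h2
              exact h2)
      show (1:ℝ≥0∞) ≤ ((Λ.toFun ⟨Set.univ, isCompact_univ⟩ : NNReal) : ℝ≥0∞)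
      exact_mod_cast h1
  haveI hprob : IsProbabilityMeasure μ := ⟨hμuniv⟩
  have hμcompl : μ Kᶜ = 0 := by
    rw [hopen Kᶜ hKc.isClosed.isOpen_compl]
    refine le_antisymm ?_ (zero_le)
    refine iSup₂_le fun K' hK' => ?_
    have h1 : Λ.toFun K' = 0 := by
      obtain ⟨f, hf0, hf1, hficc⟩ := exists_continuous_zero_one_of_isCompact hKc
        K'.isCompact.isClosed (Set.disjoint_left.2 fun a ha ha' => (hK' ha') ha)
      have hfS : L f ∈ S (K' : Set X) :=
        ⟨f, fun x => (hficc x).1, fun x hx => le_of_eq (by simpa using (hf1 hx).symm), rfl⟩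
      have hLf : L f ≤ 0 := by
        have h2 : L f ≤ p f := hLp f
        have h3 : p f = 0 := hp_zero f (fun x hx => le_of_eq (by simpa using hf0 hx))
        linarith
      have h4 : sInf (S (K' : Set X)) ≤ 0 := le_trans (csInf_le (hS_bdd _) hfS) hLf
      simp only [hΛ]
      exact Real.toNNReal_of_nonpos h4
    rw [show (Λ K' : ℝ≥0∞) = ((Λ.toFun K' : NNReal) : ℝ≥0∞) from rfl, h1]
    simp
  have hμK : μ K = 1 := by
    have h1 : μ (K ∪ Kᶜ) ≤ μ K + μ Kᶜ := measure_union_le K Kᶜ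
    rw [Set.union_compl_self, hμuniv, hμcompl, add_zero] at h1
    exact le_antisymm (le_trans (measure_mono (Set.subset_univ K)) hμuniv.le) h1
  refine ⟨μ, hprob, hμK, ?_⟩
  intro x n hn
  rw [hopen _ (isOpen_bowenBall (Fn := F n) (x := x) (ε := ε))]
  refine iSup₂_le fun K' hK' => ?_
  obtain ⟨f, hf0, hf1, hficc⟩ := exists_continuous_zero_one_of_isCompact
    (isOpen_bowenBall (Fn := F n) (x := x) (ε := ε)).isClosed_compl.isCompact
    K'.isCompact.isClosed
    (Set.disjoint_left.2 fun a ha ha' => ha (hK' ha'))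
  have hfS : L f ∈ S (K' : Set X) :=
    ⟨f, fun y => (hficc y).1, fun y hy => le_of_eq (by simpa using (hf1 hy).symm), rfl⟩
  have hq_le : q f ≤ ENNReal.ofReal (Real.exp (-s * ((F n).card : ℝ))) := by
    simp only [hq]
    refine wtW_le_single (x := x) hn fun y => ?_
    by_cases hy : y ∈ bowenBall (F n) x ε
    · rw [Set.indicator_of_mem hy]
      by_cases hyK : y ∈ K
      · rw [Set.indicator_of_mem hyK]
        calc ENNReal.ofReal (f y) ≤ ENNReal.ofReal 1 := ENNReal.ofReal_le_ofReal (hficc y).2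
          _ = 1 := ENNReal.ofReal_one
      · rw [Set.indicator_of_notMem hyK]
        exact zero_le
    · rw [Set.indicator_of_notMem hy]
      by_cases hyK : y ∈ K
      · rw [Set.indicator_of_mem hyK]
        rw [show f y = 0 by simpa using hf0 hy]
        simp
      · rw [Set.indicator_of_notMem hyK]
  have hLf : L f ≤ c⁻¹ * Real.exp (-s * ((F n).card : ℝ)) := by
    have h2 : L f ≤ p f := hLp f
    have h3 : p f ≤ c⁻¹ * Real.exp (-s * ((F n).card : ℝ)) := by
      simp only [hp]
      refine mul_le_mul_of_nonneg_left ?_ (by positivity)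
      exact ENNReal.toReal_le_of_le_ofReal (Real.exp_nonneg _) hq_le
    linarith
  have h4 : Λ.toFun K' ≤ Real.toNNReal (c⁻¹ * Real.exp (-s * ((F n).card : ℝ))) := by
    simp only [hΛ]
    exact Real.toNNReal_mono (le_trans (csInf_le (hS_bdd _) hfS) hLf)
  calc (Λ K' : ℝ≥0∞) = ((Λ.toFun K' : NNReal) : ℝ≥0∞) := rfl
    _ ≤ ((Real.toNNReal (c⁻¹ * Real.exp (-s * ((F n).card : ℝ))) : NNReal) : ℝ≥0∞) := by
        exact_mod_cast h4
    _ = ENNReal.ofReal (c⁻¹ * Real.exp (-s * ((F n).card : ℝ))) := rfl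

end AuxStepB
section AuxFinal

lemma ballM_mono_N [Group G] [MetricSpace X] [MulAction G X]
    {F : ℕ → Finset G} {Z : Set X} {ε s : ℝ} {N₁ N₂ : ℕ} (h : N₁ ≤ N₂) :
    ballM F Z N₁ ε s ≤ ballM F Z N₂ ε s := by
  refine le_iInf fun I => le_iInf fun hIc => le_iInf fun hN => le_iInf fun hcov => ?_
  exact ballM_le_cost I hIc (fun p hp => le_trans h (hN p hp)) hcov

lemma hard_direction [Group G] [MetricSpace X] [CompactSpace X]
    [MulAction G X] [ContinuousConstSMul G X] [MeasurableSpace X] [BorelSpace X]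
    {F : ℕ → Finset G} (hGrow : GrowthCond F)
    {K : Set X} (hK : K.Nonempty) (hKc : IsCompact K)
    {s δ : ℝ} (hs : 0 ≤ s) (hδ : 0 < δ) (hM : ballMtot F K (s + δ) ≠ 0) :
    ∃ μ : Measure X, IsProbabilityMeasure μ ∧ μ K = 1 ∧
      ENNReal.ofReal s ≤ lowLocEnt μ F := by
  have h1 : ∃ ε₀ : ℝ, 0 < ε₀ ∧ ballMN F K ε₀ (s+δ) ≠ 0 := by
    by_contra hcon
    push_neg at hcon
    apply hM
    rw [ballMtot]
    refine le_antisymm (iSup₂_le fun ε hε => le_of_eq (hcon ε hε)) (zero_le)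
  obtain ⟨ε₀, hε₀, hMN⟩ := h1
  have h2 : ∃ N₁, ballM F K N₁ ε₀ (s+δ) ≠ 0 := by
    by_contra hcon
    push_neg at hcon
    exact hMN (le_antisymm (iSup_le fun N => le_of_eq (hcon N)) (zero_le))
  obtain ⟨N₁, hβ⟩ := h2
  set b := min (ballM F K N₁ ε₀ (s+δ)) 1 with hb
  have hb0 : b ≠ 0 := (lt_min (pos_iff_ne_zero.2 hβ) zero_lt_one).ne'
  have hbt : b ≠ ⊤ := ((min_le_right _ _).trans_lt ENNReal.one_lt_top).ne
  have hb2 : (b/2 : ℝ≥0∞) ≠ 0 := (ENNReal.div_pos hb0 ENNReal.ofNat_ne_top).ne'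
  have hb2t : (b/2 : ℝ≥0∞) ≠ ⊤ := ne_top_of_le_ne_top hbt (ENNReal.half_le_self)
  obtain ⟨N₀, hN₀⟩ := stepA (F := F) hGrow K (ε := ε₀/2) hs hδ (η := b/2) hb2
  set N := max N₀ N₁ with hN
  have key1 : ballM F K N (2*(ε₀/2)) (s+δ) ≤ wtWset F K N (ε₀/2) s + b/2 :=
    hN₀ N (le_max_left _ _)
  have key2 : ballM F K N₁ ε₀ (s+δ) ≤ ballM F K N ε₀ (s+δ) := ballM_mono_N (le_max_right _ _)
  have key3 : b/2 ≤ wtWset F K N (ε₀/2) s := by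
    have e1 : (2:ℝ)*(ε₀/2) = ε₀ := by ring
    rw [e1] at key1
    have h4 : b ≤ wtWset F K N (ε₀/2) s + b/2 :=
      le_trans (min_le_left _ _) (le_trans key2 key1)
    have h5 : b - b/2 ≤ wtWset F K N (ε₀/2) s := tsub_le_iff_right.2 h4
    rwa [ENNReal.sub_half hbt] at h5
  set c : ℝ := (b/2).toReal with hc
  have hc0 : 0 < c := ENNReal.toReal_pos hb2 hb2t
  have hcW : ENNReal.ofReal c ≤ wtWset F K N (ε₀/2) s := by
    rw [hc, ENNReal.ofReal_toReal hb2t]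
    exact key3
  obtain ⟨μ, hμprob, hμK, hμball⟩ := stepB hKc hK (by positivity : (0:ℝ) < ε₀/2) hc0 hcW
  refine ⟨μ, hμprob, hμK, ?_⟩
  have hcard := card_tendsto_atTop hGrow
  have hlow : ∀ x : X, ENNReal.ofReal s ≤ lowLoc μ F x (ε₀/2) := by
    intro x
    have hev : ∀ᶠ n in atTop, ENNReal.ofReal (s + Real.log c / ((F n).card : ℝ))
        ≤ locTerm μ (bowenBall (F n) x (ε₀/2)) (F n).card := by
      filter_upwards [hcard.eventually_ge_atTop 1, eventually_ge_atTop N] with n hn1 hnN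
      set B := bowenBall (F n) x (ε₀/2) with hB
      by_cases hB0 : μ B = 0
      · rw [locTerm, if_pos hB0]
        exact le_top
      · rw [locTerm, if_neg hB0]
        apply ENNReal.ofReal_le_ofReal
        have hm : (0:ℝ) < ((F n).card : ℝ) := lt_of_lt_of_le zero_lt_one hn1
        have hball := hμball x n hnN
        have hμB1 : (μ B).toReal ≤ c⁻¹ * Real.exp (-s * ((F n).card : ℝ)) := by
          refine ENNReal.toReal_le_of_le_ofReal (by positivity) hball
        have hμBpos : 0 < (μ B).toReal := ENNReal.toReal_pos hB0 (measure_ne_top μ B)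
        have hlog : Real.log ((μ B).toReal) ≤ -Real.log c + (-s * ((F n).card:ℝ)) := by
          calc Real.log ((μ B).toReal)
              ≤ Real.log (c⁻¹ * Real.exp (-s * ((F n).card:ℝ))) :=
                Real.log_le_log hμBpos hμB1
            _ = Real.log c⁻¹ + (-s * ((F n).card:ℝ)) := by
                rw [Real.log_mul (by positivity) (Real.exp_ne_zero _), Real.log_exp]
            _ = -Real.log c + (-s * ((F n).card:ℝ)) := by rw [Real.log_inv]
        rw [le_div_iff₀ hm, add_mul, div_mul_cancel₀ _ hm.ne']
        linarith
    have hlim : Tendsto (fun n => ENNReal.ofReal (s + Real.log c / ((F n).card : ℝ))) atTop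
        (𝓝 (ENNReal.ofReal s)) := by
      have h0 : Tendsto (fun n => Real.log c / ((F n).card : ℝ)) atTop (𝓝 0) :=
        Tendsto.div_atTop tendsto_const_nhds hcard
      have h1 : Tendsto (fun n => s + Real.log c / ((F n).card : ℝ)) atTop (𝓝 (s + 0)) :=
        tendsto_const_nhds.add h0
      rw [add_zero] at h1
      exact (ENNReal.continuous_ofReal.tendsto s).comp h1
    calc ENNReal.ofReal s
        = liminf (fun n => ENNReal.ofReal (s + Real.log c / ((F n).card:ℝ))) atTop :=
          hlim.liminf_eq.symm
      _ ≤ liminf (fun n => locTerm μ (bowenBall (F n) x (ε₀/2)) (F n).card) atTop := by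
          refine Filter.liminf_le_liminf hev ?_ ?_
          · isBoundedDefault
          · isBoundedDefault
      _ = lowLoc μ F x (ε₀/2) := rfl
  calc ENNReal.ofReal s = ∫⁻ _, ENNReal.ofReal s ∂μ := by
        rw [lintegral_const, measure_univ, mul_one]
    _ ≤ ∫⁻ x, lowLocPt μ F x ∂μ := lintegral_mono fun x =>
        le_trans (hlow x) (le_iSup₂_of_le (ε₀/2) (by positivity) le_rfl)
    _ = lowLocEnt μ F := rfl

end AuxFinal

/-- variational principle for Bowen entropy. For a countable discrete group
`G` acting continuously on a compact metric space `X`, a non-empty compact `K ⊆ X` and a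
sequence `{F_n}` of finite subsets of `G` with `lim_n |F_n|/log n = ∞` (no Følner condition),
`h^B_top(K,{F_n}) = sup { h̲_μ^{loc}({F_n}) : μ(K) = 1 }`. -/
theorem bowenEnt_eq_iSup_lowLocEnt
    [Group G] [Countable G] [MetricSpace X] [CompactSpace X]
    [MulAction G X] [ContinuousConstSMul G X] [MeasurableSpace X] [BorelSpace X]
    (F : ℕ → Finset G) (hGrow : GrowthCond F)
    (K : Set X) (hK : K.Nonempty) (hKc : IsCompact K) :
    bowenEnt F K =
      ⨆ (μ : Measure X) (_ : IsProbabilityMeasure μ) (_ : μ K = 1), lowLocEnt μ F := by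

  have hKm : MeasurableSet K := hKc.isClosed.measurableSet
  refine le_antisymm ?_ ?_
  · -- hard direction: bowenEnt ≤ sup
    by_contra hcon
    push_neg at hcon
    obtain ⟨r, hr0, hrR, hrB⟩ := ENNReal.lt_iff_exists_real_btwn.1 hcon
    obtain ⟨r', hr'0, hrr', hr'B⟩ := ENNReal.lt_iff_exists_real_btwn.1 hrB
    have hrr'' : r < r' := by
      have h1 : 0 < r' := by
        by_contra h
        push_neg at h
        rw [ENNReal.ofReal_eq_zero.2 h] at hrr'
        exact absurd hrr' (not_lt.2 (zero_le))
      exact (ENNReal.ofReal_lt_ofReal_iff h1).1 hrr'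
    have hMne : ballMtot F K (r + (r' - r)) ≠ 0 := by
      intro h0
      have h1 : bowenEnt F K ≤ ENNReal.ofReal (r + (r' - r)) := by
        rw [bowenEnt]
        exact iInf₂_le (r + (r' - r)) h0
      rw [show r + (r' - r) = r' by ring] at h1
      exact absurd (lt_of_lt_of_le hr'B h1) (lt_irrefl _)
    obtain ⟨μ, hμp, hμK1, hμs⟩ := hard_direction hGrow hK hKc hr0 (by linarith) hMne
    have h2 : ENNReal.ofReal r ≤
        ⨆ (μ : Measure X) (_ : IsProbabilityMeasure μ) (_ : μ K = 1), lowLocEnt μ F := by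
      refine le_trans hμs ?_
      exact le_iSup₂_of_le μ hμp (le_iSup_of_le hμK1 le_rfl)
    exact absurd (lt_of_le_of_lt h2 hrR) (lt_irrefl _)
  · -- easy direction
    refine iSup₂_le fun μ hμp => iSup_le fun hμ1 => ?_
    refine le_iInf₂ fun t ht => ?_
    haveI := hμp
    refine lowLocEnt_le_ofReal μ hμ1 hKm ?_
    intro ε hε N
    have h1 : ballMN F K ε t = 0 := by
      have h2 : ballMN F K ε t ≤ ballMtot F K t := le_iSup₂_of_le ε hε le_rfl
      rw [ht] at h2
      exact le_antisymm h2 (zero_le)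
    have h3 : ballM F K N ε t ≤ ballMN F K ε t := by
      rw [ballMN]
      exact le_iSup (fun N => ballM F K N ε t) N
    rw [h1] at h3
    exact le_antisymm h3 (zero_le)
end

section
/- Let G be a countable discrete group acting continuously on a compact metric space (X,d) and let {F_n} be a sequence of finite subsets of G satisfying lim_{n→∞} |F_n|/log n = ∞. Then for every Z ⊆ X, the weighted Bowen topological entropy equals the Bowen topological entropy: h^{WB}_top(Z,{F_n}) = h^B_top(Z,{F_n}). -/
open Filter Set MeasureTheory Topology ENNReal Pointwise

variable {G X : Type*}

section ProofAux

variable [Group G] [MetricSpace X] [MulAction G X]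

/-- The key covering lemma (Feng–Huang style): from a weighted family of Bowen balls of a fixed
level whose weighted multiplicity is at least `δ` on `Z`, one can select a small subfamily of
tripled balls covering `Z`. -/
private lemma wbe_lemA (Fn : Finset G) (ε : ℝ) {ι : Type*} (x : ι → X) (δ : ℝ≥0∞)
    (hδ0 : 0 < δ) (hδtop : δ ≠ ⊤) :
    ∀ (k : ℕ) (c : ι → ℝ≥0∞) (Z : Set X),
      (∀ z ∈ Z, δ ≤ ∑' i, c i * (bowenBall Fn (x i) ε).indicator (fun _ => (1 : ℝ≥0∞)) z) →
      (∑' i, c i) < ((k : ℝ≥0∞) + 1) * δ →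
      ∃ J : Finset ι, J.card ≤ k ∧ (∀ j ∈ J, c j ≠ 0) ∧
        Z ⊆ ⋃ j ∈ J, bowenBall Fn (x j) (3 * ε) := by
  classical
  have hind : ∀ (S : Set X) (y : X), S.indicator (fun _ => (1 : ℝ≥0∞)) y ≤ 1 := by
    intro S y; by_cases h : y ∈ S <;> simp [h]
  intro k
  induction k with
  | zero =>
    intro c Z hZ hS
    refine ⟨∅, le_rfl, by simp, ?_⟩
    intro z hz
    exfalso
    have h1 : δ ≤ ∑' i, c i := by
      refine (hZ z hz).trans (ENNReal.tsum_le_tsum fun i => ?_)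
      calc c i * (bowenBall Fn (x i) ε).indicator (fun _ => (1 : ℝ≥0∞)) z
          ≤ c i * 1 := mul_le_mul_right (hind _ _) _
        _ = c i := mul_one _
    simp only [Nat.cast_zero, zero_add, one_mul] at hS
    exact absurd (h1.trans_lt hS) (lt_irrefl _)
  | succ k ih =>
    intro c Z hZ hS
    rcases Set.eq_empty_or_nonempty Z with rfl | ⟨z, hz⟩
    · exact ⟨∅, by simp, by simp, by simp⟩
    have hz1 := hZ z hz
    have hex : ∃ j, c j * (bowenBall Fn (x j) ε).indicator (fun _ => (1 : ℝ≥0∞)) z ≠ 0 := by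
      by_contra hcon
      push_neg at hcon
      rw [ENNReal.tsum_eq_zero.2 hcon] at hz1
      exact hδ0.ne' (le_antisymm hz1 zero_le)
    obtain ⟨j, hj⟩ := hex
    have hcj : c j ≠ 0 := fun h => hj (by simp [h])
    have hzj : z ∈ bowenBall Fn (x j) ε := by
      by_contra h
      exact hj (by simp [Set.indicator_of_notMem h])
    set c' : ι → ℝ≥0∞ := fun i => if z ∈ bowenBall Fn (x i) ε then 0 else c i with hc'
    have hsplit : ∀ i, c i
        = c' i + c i * (bowenBall Fn (x i) ε).indicator (fun _ => (1 : ℝ≥0∞)) z := by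
      intro i
      by_cases h : z ∈ bowenBall Fn (x i) ε
      · simp [hc', h]
      · simp [hc', h]
    have hdecomp : ∑' i, c i = (∑' i, c' i)
        + ∑' i, c i * (bowenBall Fn (x i) ε).indicator (fun _ => (1 : ℝ≥0∞)) z := by
      rw [← ENNReal.tsum_add]
      exact tsum_congr hsplit
    have h2 : (∑' i, c' i) + δ ≤ ∑' i, c i := by
      rw [hdecomp]
      exact add_le_add_right hz1 _
    have h3 : (∑' i, c' i) < ((k : ℝ≥0∞) + 1) * δ := by
      have h4 : (∑' i, c' i) + δ < ((k : ℝ≥0∞) + 1) * δ + δ := by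
        refine h2.trans_lt (hS.trans_le (le_of_eq ?_))
        push_cast
        ring
      exact (ENNReal.add_lt_add_iff_right hδtop).1 h4
    obtain ⟨J', hcard', hne', hcov'⟩ := ih c'
      {y ∈ Z | δ ≤ ∑' i, c' i * (bowenBall Fn (x i) ε).indicator (fun _ => (1 : ℝ≥0∞)) y}
      (fun y hy => hy.2) h3
    refine ⟨insert j J', ?_, ?_, ?_⟩
    · exact (Finset.card_insert_le _ _).trans (Nat.succ_le_succ hcard')
    · intro j' hj'
      rcases Finset.mem_insert.1 hj' with rfl | hmem
      · exact hcj
      · intro h0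
        exact hne' j' hmem (by simp [hc', h0])
    · intro y hy
      by_cases hy' : δ ≤ ∑' i, c' i * (bowenBall Fn (x i) ε).indicator (fun _ => (1 : ℝ≥0∞)) y
      · obtain ⟨i, hi, hyi⟩ := Set.mem_iUnion₂.1 (hcov' ⟨hy, hy'⟩)
        exact Set.mem_iUnion₂.2 ⟨i, Finset.mem_insert_of_mem hi, hyi⟩
      · have hlt : (∑' i, c' i * (bowenBall Fn (x i) ε).indicator (fun _ => (1 : ℝ≥0∞)) y)
            < ∑' i, c i * (bowenBall Fn (x i) ε).indicator (fun _ => (1 : ℝ≥0∞)) y :=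
          (lt_of_not_ge hy').trans_le (hZ y hy)
        have hex2 : ∃ i, c' i * (bowenBall Fn (x i) ε).indicator (fun _ => (1 : ℝ≥0∞)) y
            ≠ c i * (bowenBall Fn (x i) ε).indicator (fun _ => (1 : ℝ≥0∞)) y := by
          by_contra hcon
          push_neg at hcon
          rw [tsum_congr hcon] at hlt
          exact lt_irrefl _ hlt
        obtain ⟨i, hi⟩ := hex2
        have hzi : z ∈ bowenBall Fn (x i) ε := by
          by_contra h
          exact hi (by simp [hc', h])
        have hyi : y ∈ bowenBall Fn (x i) ε := by
          by_contra h
          exact hi (by simp [Set.indicator_of_notMem h])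
        have hmem : y ∈ bowenBall Fn (x j) (3 * ε) := by
          intro g hg
          have d1 := hzj g hg
          have d2 := hzi g hg
          have d3 := hyi g hg
          have d4 := dist_triangle4 (g • x j) (g • z) (g • x i) (g • y)
          rw [dist_comm (g • x i) (g • z)] at d2
          linarith
        exact Set.mem_iUnion₂.2 ⟨j, Finset.mem_insert_self _ _, hmem⟩

/-- The easy inequality: the weighted quantity is dominated by the unweighted one. -/
private lemma wbe_wt_le (F : ℕ → Finset G) (Z : Set X) (s : ℝ) :
    wtWtot F Z s ≤ ballMtot F Z s := by
  refine iSup_mono fun ε => iSup_mono fun hε => iSup_mono fun N => ?_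
  rw [wtWset, wtW, ballM]
  refine le_iInf fun I => le_iInf fun hcnt => le_iInf fun hlev => le_iInf fun hcov => ?_
  refine iInf_le_of_le I (iInf_le_of_le (fun _ => 1) (iInf_le_of_le hcnt
    (iInf_le_of_le ?_ (iInf_le_of_le ?_ ?_))))
  · exact fun p hp => ⟨hlev p hp, zero_lt_one, ENNReal.one_lt_top⟩
  · intro x
    by_cases hx : x ∈ Z
    · rw [Set.indicator_of_mem hx]
      obtain ⟨p, hpI, hpx⟩ := Set.mem_iUnion₂.1 (hcov hx)
      have h1 : (1 : ℝ≥0∞) = (fun _ : X × ℕ => (1 : ℝ≥0∞)) ((⟨p, hpI⟩ : I) : X × ℕ)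
          * (bowenBall (F ((⟨p, hpI⟩ : I) : X × ℕ).2) ((⟨p, hpI⟩ : I) : X × ℕ).1 ε).indicator
            (fun _ => (1 : ℝ≥0∞)) x := by
        simp [Set.indicator_of_mem hpx]
      exact h1.le.trans (ENNReal.le_tsum (⟨p, hpI⟩ : I))
    · simp [Set.indicator_of_notMem hx]
  · exact le_of_eq (tsum_congr fun p => one_mul _)

/-- The core estimate: the unweighted quantity vanishes at every level above a level where the
weighted one vanishes, using the growth condition. -/
private lemma wbe_core (F : ℕ → Finset G) (hGrow : GrowthCond F) (Z : Set X)
    {s t : ℝ} (hst : s < t) (h : wtWtot F Z s = 0) :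
    ballMtot F Z t = 0 := by
  classical
  have hts : 0 < t - s := sub_pos.2 hst
  set f : ℕ → ℝ := fun n => 1 / (2 * ((n : ℝ) + 1)) with hf
  set δ : ℕ → ℝ≥0∞ := fun n => ENNReal.ofReal (f n - f (n + 1)) with hδ
  have hfval : ∀ n : ℕ, f n - f (n + 1) = 1 / (2 * ((n : ℝ) + 1) * ((n : ℝ) + 2)) := by
    intro n
    have h1 : ((n : ℝ) + 1) ≠ 0 := by positivity
    have h2 : ((n : ℝ) + 2) ≠ 0 := by positivity
    rw [hf]
    push_cast
    field_simp
    ring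
  have hδpos : ∀ n, 0 < δ n := by
    intro n
    rw [hδ]
    dsimp only
    rw [hfval n]
    exact ENNReal.ofReal_pos.2 (by positivity)
  have hδtop : ∀ n, δ n ≠ ⊤ := fun n => ENNReal.ofReal_ne_top
  have hδsum : ∑' n, δ n ≤ ENNReal.ofReal (1 / 2) := by
    rw [ENNReal.tsum_eq_iSup_sum]
    refine iSup_le fun fs => ?_
    obtain ⟨m, hm⟩ := fs.exists_nat_subset_range
    calc ∑ n ∈ fs, δ n ≤ ∑ n ∈ Finset.range m, δ n :=
          Finset.sum_le_sum_of_subset hm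
      _ = ENNReal.ofReal (∑ n ∈ Finset.range m, (f n - f (n + 1))) := by
          rw [ENNReal.ofReal_sum_of_nonneg]
          intro i _
          rw [hfval i]
          positivity
      _ ≤ ENNReal.ofReal (1 / 2) := by
          apply ENNReal.ofReal_le_ofReal
          rw [Finset.sum_range_sub' f m]
          have h1 : 0 ≤ f m := by rw [hf]; positivity
          have h2 : f 0 = 1 / 2 := by rw [hf]; norm_num
          rw [h2]
          linarith
  have hhalf : ENNReal.ofReal (1 / 2) < 1 := ENNReal.ofReal_lt_one.2 (by norm_num)
  -- the growth condition gives the key decay estimate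
  have hev : ∀ᶠ n : ℕ in atTop,
      ENNReal.ofReal (Real.exp (-(t - s) * ((F n).card : ℝ))) ≤ δ n := by
    have h1 : ∀ᶠ n : ℕ in atTop, 4 / (t - s) ≤ ((F n).card : ℝ) / Real.log n :=
      hGrow.eventually_ge_atTop _
    filter_upwards [h1, Filter.eventually_ge_atTop 3] with n hn hn3
    have hn3R : (3 : ℝ) ≤ (n : ℝ) := by exact_mod_cast hn3
    have hn0 : (0 : ℝ) < n := by linarith
    have hlog : 0 < Real.log n := Real.log_pos (by linarith)
    have hcard : 4 * Real.log n ≤ (t - s) * ((F n).card : ℝ) := by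
      rw [div_le_div_iff₀ hts hlog] at hn
      linarith
    have hexp : Real.exp (-(t - s) * ((F n).card : ℝ)) ≤ Real.exp (-(4 * Real.log n)) :=
      Real.exp_le_exp.2 (by linarith)
    have hexp2 : Real.exp (-(4 * Real.log n)) = (((n : ℝ) ^ (4 : ℕ)))⁻¹ := by
      rw [Real.exp_neg]
      congr 1
      rw [show (4 : ℝ) * Real.log n = ((4 : ℕ) : ℝ) * Real.log n by norm_num,
        Real.exp_nat_mul, Real.exp_log hn0]
    have hbound : (((n : ℝ) ^ (4 : ℕ)))⁻¹ ≤ f n - f (n + 1) := by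
      rw [hfval n, one_div]
      have hden : (0 : ℝ) < 2 * ((n : ℝ) + 1) * ((n : ℝ) + 2) := by positivity
      refine inv_anti₀ hden ?_
      have hn2 : (9 : ℝ) ≤ (n : ℝ) * (n : ℝ) := by nlinarith
      nlinarith [mul_le_mul_of_nonneg_left hn2 (mul_nonneg hn0.le hn0.le)]
    rw [hδ]
    exact ENNReal.ofReal_le_ofReal (by calc
      Real.exp (-(t - s) * ((F n).card : ℝ)) ≤ Real.exp (-(4 * Real.log n)) := hexp
      _ = (((n : ℝ) ^ (4 : ℕ)))⁻¹ := hexp2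
      _ ≤ f n - f (n + 1) := hbound)
  obtain ⟨N₁, hN₁⟩ := Filter.eventually_atTop.1 hev
  -- reduce to showing each `ballM` vanishes
  simp only [ballMtot, ballMN, ENNReal.iSup_eq_zero]
  intro ε hε N
  refine le_antisymm (ENNReal.le_of_forall_pos_le_add fun η hη _ => ?_) zero_le
  rw [zero_add]
  have hθ0 : (0 : ℝ≥0∞) < (η : ℝ≥0∞) := by exact_mod_cast hη
  have hθtop : ((η : ℝ≥0∞)) ≠ ⊤ := ENNReal.coe_ne_top
  set ε' : ℝ := ε / 3 with hε'
  have hε'0 : 0 < ε' := by positivity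
  set N' : ℕ := max N N₁ with hN'
  -- extract a weighted family with small total weighted sum
  have hw : wtWset F Z N' ε' s = 0 := by
    simp only [wtWtot, wtWN, ENNReal.iSup_eq_zero] at h
    exact h ε' hε'0 N'
  rw [wtWset] at hw
  have hw' : wtW F (Z.indicator fun _ => (1 : ℝ≥0∞)) N' ε' s < (η : ℝ≥0∞) := by
    rw [hw]; exact hθ0
  rw [wtW] at hw'
  simp only [iInf_lt_iff] at hw'
  obtain ⟨I, c, hIcnt, hImem, hIcov, hIsum⟩ := hw'
  -- split weights by level
  set cn : ℕ → I → ℝ≥0∞ := fun n p => if (p : X × ℕ).2 = n then c (p : X × ℕ) else 0 with hcn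
  have hswap : ∀ ψ : ℕ → I → ℝ≥0∞,
      ∑' n, ∑' p : I, cn n p * ψ n p = ∑' p : I, c (p : X × ℕ) * ψ (p : X × ℕ).2 p := by
    intro ψ
    rw [ENNReal.tsum_comm]
    refine tsum_congr fun p => ?_
    rw [tsum_eq_single ((p : X × ℕ).2) ?_]
    · simp [hcn]
    · intro n hn
      simp [hcn, Ne.symm hn]
  -- the level sums
  have hsum2 : ∑' n, (∑' p : I, cn n p)
        * ENNReal.ofReal (Real.exp (-s * ((F n).card : ℝ)))
      = ∑' p : I, c (p : X × ℕ)
        * ENNReal.ofReal (Real.exp (-s * ((F (p : X × ℕ).2).card : ℝ))) := by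
    rw [← hswap (fun n _ => ENNReal.ofReal (Real.exp (-s * ((F n).card : ℝ))))]
    exact tsum_congr fun n => (ENNReal.tsum_mul_right).symm
  have hIsum' : ∑' n, (∑' p : I, cn n p)
      * ENNReal.ofReal (Real.exp (-s * ((F n).card : ℝ))) < (η : ℝ≥0∞) := by
    rw [hsum2]; exact hIsum
  have hSfin : ∀ n, (∑' p : I, cn n p) ≠ ⊤ := by
    intro n htop
    have h1 : (∑' p : I, cn n p) * ENNReal.ofReal (Real.exp (-s * ((F n).card : ℝ)))
        ≤ ∑' n', (∑' p : I, cn n' p) * ENNReal.ofReal (Real.exp (-s * ((F n').card : ℝ))) :=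
      ENNReal.le_tsum n
    rw [htop, ENNReal.top_mul (ENNReal.ofReal_pos.2 (Real.exp_pos _)).ne'] at h1
    exact hθtop (top_le_iff.1 (h1.trans hIsum'.le))
  -- choose minimal cardinality bounds at each level
  have hkex : ∀ n, ∃ k : ℕ, (∑' p : I, cn n p) < ((k : ℝ≥0∞) + 1) * δ n := by
    intro n
    obtain ⟨k, hk⟩ := ENNReal.exists_nat_gt
      ((ENNReal.div_lt_top (hSfin n) (hδpos n).ne').ne)
    refine ⟨k, ?_⟩
    have h1 := (ENNReal.div_lt_iff (Or.inl (hδpos n).ne') (Or.inl (hδtop n))).1 hk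
    exact h1.trans_le (mul_le_mul_left le_self_add _)
  set K : ℕ → ℕ := fun n => Nat.find (hkex n) with hK
  have hKspec : ∀ n, (∑' p : I, cn n p) < ((K n : ℝ≥0∞) + 1) * δ n :=
    fun n => Nat.find_spec (hkex n)
  have hKmin : ∀ n, K n ≠ 0 → ((K n : ℝ≥0∞)) * δ n ≤ ∑' p : I, cn n p := by
    intro n h0
    obtain ⟨m, hm⟩ := Nat.exists_eq_succ_of_ne_zero h0
    have h1 := Nat.find_min (hkex n) (show m < K n by omega)
    rw [not_lt] at h1
    rw [hm]
    push_cast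
    exact h1
  -- apply the covering lemma at each level
  have happ : ∀ n, ∃ J : Finset I, J.card ≤ K n ∧ (∀ j ∈ J, cn n j ≠ 0) ∧
      {y ∈ Z | δ n ≤ ∑' p : I, cn n p
          * (bowenBall (F n) ((p : X × ℕ)).1 ε').indicator (fun _ => (1 : ℝ≥0∞)) y}
        ⊆ ⋃ j ∈ J, bowenBall (F n) (((j : I) : X × ℕ)).1 (3 * ε') := by
    intro n
    exact wbe_lemA (F n) ε' (fun p : I => ((p : X × ℕ)).1) (δ n) (hδpos n) (hδtop n)
      (K n) (cn n) _ (fun y hy => hy.2) (hKspec n)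
  choose J hJcard hJne hJcov using happ
  have hJlev : ∀ n, ∀ j ∈ J n, ((j : I) : X × ℕ).2 = n := by
    intro n j hj
    by_contra hne
    exact hJne n j hj (by simp [hcn, hne])
  -- every point of Z is in some level set
  have hclaim1 : ∀ x ∈ Z, (1 : ℝ≥0∞) ≤ ∑' n, ∑' p : I, cn n p
      * (bowenBall (F n) ((p : X × ℕ)).1 ε').indicator (fun _ => (1 : ℝ≥0∞)) x := by
    intro x hx
    have h1 := hIcov x
    rw [Set.indicator_of_mem hx] at h1
    refine h1.trans (le_of_eq ?_)
    exact (hswap (fun n p =>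
      (bowenBall (F n) ((p : X × ℕ)).1 ε').indicator (fun _ => (1 : ℝ≥0∞)) x)).symm
  have hclaim3 : ∀ x ∈ Z, ∃ n, δ n ≤ ∑' p : I, cn n p
      * (bowenBall (F n) ((p : X × ℕ)).1 ε').indicator (fun _ => (1 : ℝ≥0∞)) x := by
    intro x hx
    by_contra hcon
    push_neg at hcon
    have h1 : ∑' n, ∑' p : I, cn n p
        * (bowenBall (F n) ((p : X × ℕ)).1 ε').indicator (fun _ => (1 : ℝ≥0∞)) x
        ≤ ∑' n, δ n := ENNReal.tsum_le_tsum fun n => (hcon n).le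
    exact absurd (((hclaim1 x hx).trans (h1.trans hδsum)).trans_lt hhalf) (lt_irrefl _)
  -- assemble the cover
  set Icov : Set (X × ℕ) := ⋃ n, (fun p : I => (p : X × ℕ)) '' (J n : Set I) with hIcovdef
  have hIcovcnt : Icov.Countable :=
    countable_iUnion fun n => ((J n).finite_toSet.image _).countable
  have hIcovN : ∀ q ∈ Icov, N ≤ q.2 := by
    intro q hq
    obtain ⟨n, hn⟩ := Set.mem_iUnion.1 hq
    obtain ⟨p, _, hpq⟩ := hn
    have hpq' : (p : X × ℕ) = q := hpq
    have h1 := (hImem (p : X × ℕ) p.2).1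
    rw [hpq'] at h1
    exact le_trans (le_max_left N N₁) h1
  have hcover : Z ⊆ ⋃ q ∈ Icov, bowenBall (F q.2) q.1 ε := by
    intro x hx
    obtain ⟨n, hn⟩ := hclaim3 x hx
    obtain ⟨j, hjJ, hjx⟩ := Set.mem_iUnion₂.1 (hJcov n ⟨hx, hn⟩)
    have hlev := hJlev n j hjJ
    refine Set.mem_iUnion₂.2 ⟨((j : I) : X × ℕ),
      Set.mem_iUnion.2 ⟨n, Set.mem_image_of_mem _ (Finset.mem_coe.2 hjJ)⟩, ?_⟩
    rw [hlev]
    have h3 : 3 * ε' = ε := by rw [hε']; ring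
    rwa [h3] at hjx
  -- estimate the sum of the cover
  have hballM : ballM F Z N ε t ≤ ∑' q : Icov,
      ENNReal.ofReal (Real.exp (-t * ((F (q : X × ℕ).2).card : ℝ))) := by
    rw [ballM]
    exact iInf_le_of_le Icov (iInf_le_of_le hIcovcnt (iInf_le_of_le hIcovN
      (iInf_le _ hcover)))
  have hsig : ∑' q : Icov, ENNReal.ofReal (Real.exp (-t * ((F (q : X × ℕ).2).card : ℝ)))
      ≤ ∑' n, ((J n).card : ℝ≥0∞) * ENNReal.ofReal (Real.exp (-t * ((F n).card : ℝ))) := by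
    set σ : (Σ n : ℕ, {p : I // p ∈ J n}) → Icov := fun w =>
      ⟨((w.2 : I) : X × ℕ), Set.mem_iUnion.2 ⟨w.1, Set.mem_image_of_mem _
        (Finset.mem_coe.2 w.2.2)⟩⟩ with hσ
    have hσsurj : Function.Surjective σ := by
      rintro ⟨q, hq⟩
      obtain ⟨n, hn⟩ := Set.mem_iUnion.1 hq
      obtain ⟨p, hp, hpq⟩ := hn
      exact ⟨⟨n, ⟨p, Finset.mem_coe.1 hp⟩⟩, Subtype.ext hpq⟩
    calc ∑' q : Icov, ENNReal.ofReal (Real.exp (-t * ((F (q : X × ℕ).2).card : ℝ)))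
        ≤ ∑' w : (Σ n : ℕ, {p : I // p ∈ J n}),
          ENNReal.ofReal (Real.exp (-t * ((F ((σ w : X × ℕ)).2).card : ℝ))) :=
          ENNReal.tsum_le_tsum_comp_of_surjective hσsurj _
      _ = ∑' n, ∑' p : {p : I // p ∈ J n},
          ENNReal.ofReal (Real.exp (-t * ((F n).card : ℝ))) := by
          rw [ENNReal.tsum_sigma']
          refine tsum_congr fun n => tsum_congr fun p => ?_
          have h1 : ((σ ⟨n, p⟩ : X × ℕ)).2 = n := hJlev n p p.2
          rw [h1]
      _ = ∑' n, ((J n).card : ℝ≥0∞)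
          * ENNReal.ofReal (Real.exp (-t * ((F n).card : ℝ))) := by
          refine tsum_congr fun n => ?_
          rw [Finset.tsum_subtype (J n)
            (fun _ => ENNReal.ofReal (Real.exp (-t * ((F n).card : ℝ))))]
          rw [Finset.sum_const, nsmul_eq_mul]
  have hlevel : ∀ n, ((J n).card : ℝ≥0∞) * ENNReal.ofReal (Real.exp (-t * ((F n).card : ℝ)))
      ≤ (∑' p : I, cn n p) * ENNReal.ofReal (Real.exp (-s * ((F n).card : ℝ))) := by
    intro n
    rcases Nat.eq_zero_or_pos (J n).card with h0 | hpos
    · rw [h0]; simp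
    · have hnN1 : N₁ ≤ n := by
        obtain ⟨j, hj⟩ := Finset.card_pos.1 hpos
        have hlev := hJlev n j hj
        have hmem := (hImem ((j : I) : X × ℕ) (j : I).2).1
        rw [hlev] at hmem
        exact le_trans (le_max_right N N₁) hmem
      have hedle : ENNReal.ofReal (Real.exp (-(t - s) * ((F n).card : ℝ))) ≤ δ n :=
        hN₁ n hnN1
      have hK0 : K n ≠ 0 := by
        intro h0'
        have h1 := hJcard n
        omega
      have hKle := hKmin n hK0
      have hete : ENNReal.ofReal (Real.exp (-t * ((F n).card : ℝ)))
          = ENNReal.ofReal (Real.exp (-s * ((F n).card : ℝ)))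
            * ENNReal.ofReal (Real.exp (-(t - s) * ((F n).card : ℝ))) := by
        rw [← ENNReal.ofReal_mul (Real.exp_nonneg _), ← Real.exp_add]
        congr 2
        ring
      calc ((J n).card : ℝ≥0∞) * ENNReal.ofReal (Real.exp (-t * ((F n).card : ℝ)))
          ≤ (K n : ℝ≥0∞) * ENNReal.ofReal (Real.exp (-t * ((F n).card : ℝ))) :=
            mul_le_mul_left (by exact_mod_cast hJcard n) _
        _ = (K n : ℝ≥0∞) * (ENNReal.ofReal (Real.exp (-s * ((F n).card : ℝ)))
            * ENNReal.ofReal (Real.exp (-(t - s) * ((F n).card : ℝ)))) := by rw [hete]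
        _ ≤ (K n : ℝ≥0∞) * (ENNReal.ofReal (Real.exp (-s * ((F n).card : ℝ))) * δ n) :=
            mul_le_mul_right (mul_le_mul_right hedle _) _
        _ = ((K n : ℝ≥0∞) * δ n) * ENNReal.ofReal (Real.exp (-s * ((F n).card : ℝ))) := by
            ring
        _ ≤ (∑' p : I, cn n p) * ENNReal.ofReal (Real.exp (-s * ((F n).card : ℝ))) :=
            mul_le_mul_left hKle _
  calc ballM F Z N ε t
      ≤ ∑' q : Icov, ENNReal.ofReal (Real.exp (-t * ((F (q : X × ℕ).2).card : ℝ))) := hballM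
    _ ≤ ∑' n, ((J n).card : ℝ≥0∞) * ENNReal.ofReal (Real.exp (-t * ((F n).card : ℝ))) := hsig
    _ ≤ ∑' n, (∑' p : I, cn n p) * ENNReal.ofReal (Real.exp (-s * ((F n).card : ℝ))) :=
        ENNReal.tsum_le_tsum hlevel
    _ ≤ (η : ℝ≥0∞) := hIsum'.le

end ProofAux

/-- If `lim_n |F_n|/log n = ∞` then for every `Z ⊆ X` the weighted Bowen
topological entropy equals the Bowen topological entropy:
`h^{WB}_top(Z,{F_n}) = h^B_top(Z,{F_n})`. -/
theorem wtBowenEnt_eq_bowenEnt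
    [Group G] [Countable G] [MetricSpace X] [CompactSpace X]
    [MulAction G X] [ContinuousConstSMul G X]
    (F : ℕ → Finset G) (hGrow : GrowthCond F) (Z : Set X) :
    wtBowenEnt F Z = bowenEnt F Z := by
  refine le_antisymm ?_ ?_
  · refine le_iInf fun s => le_iInf fun hs => ?_
    have h0 : wtWtot F Z s = 0 :=
      le_antisymm (le_of_le_of_eq (wbe_wt_le F Z s) hs) zero_le
    exact iInf_le_of_le s (iInf_le_of_le h0 le_rfl)
  · refine le_iInf fun s => le_iInf fun hs => ?_
    refine ENNReal.le_of_forall_pos_le_add fun η hη _ => ?_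
    have hηR : (0 : ℝ) < (η : ℝ) := hη
    have hcore : ballMtot F Z (s + (η : ℝ)) = 0 :=
      wbe_core F hGrow Z (lt_add_of_pos_right s hηR) hs
    have h1 : bowenEnt F Z ≤ ENNReal.ofReal (s + (η : ℝ)) :=
      iInf_le_of_le (s + (η : ℝ)) (iInf_le_of_le hcore le_rfl)
    calc bowenEnt F Z ≤ ENNReal.ofReal (s + (η : ℝ)) := h1
      _ ≤ ENNReal.ofReal s + ENNReal.ofReal (η : ℝ) := ENNReal.ofReal_add_le
      _ = ENNReal.ofReal s + (η : ℝ≥0∞) := by rw [ENNReal.ofReal_coe_nnreal]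
end
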